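/- arXiv:2410.14591 — 4 statements merged into one kernel-verified Lean document; each statement's English description precedes it below -/
import Mathlib

section
/- The topological dual of KRu(Z) is isometrically isomorphic to Lip(Z): (KRu(Z))* ≅ Lip(Z), where the pairing is given by integration against measures in M_1(Z) and extended by continuity. -/
open MeasureTheory Filter Topology
open scoped ENNReal NNReal

noncomputable section
attribute [local instance] Classical.propDecidable

variable {Z : Type*} [MetricSpace Z] [MeasurableSpace Z] [BorelSpace Z]

/-- Integral `∫ f dμ` of a function against a finite signed measure, via Jordan decomposition. -/
def sInteg (μ : SignedMeasure Z) (f : Z → ℝ) : ℝ :=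
  (∫ z, f z ∂μ.toJordanDecomposition.posPart) - ∫ z, f z ∂μ.toJordanDecomposition.negPart

/-- Total variation norm `‖μ‖_TV`. -/
def tvNorm (μ : SignedMeasure Z) : ℝ := (μ.totalVariation Set.univ).toReal

/-- The unbalanced Kantorovich–Rubinstein norm
`‖μ‖_KRu = |μ(Z)| + sup { ∫ f dμ : f(e) = 0, Lip(f) ≤ 1 }`. -/
def kruNorm (e : Z) (μ : SignedMeasure Z) : ℝ :=
  |μ Set.univ| +
    sSup {r : ℝ | ∃ f : Z → ℝ, f e = 0 ∧ LipschitzWith 1 f ∧ r = sInteg μ f}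

/-- The balanced Kantorovich–Rubinstein norm `‖μ‖_KR = sup { ∫ f dμ : f(e) = 0, Lip(f) ≤ 1 }`. -/
def krNorm (e : Z) (μ : SignedMeasure Z) : ℝ :=
  sSup {r : ℝ | ∃ f : Z → ℝ, f e = 0 ∧ LipschitzWith 1 f ∧ r = sInteg μ f}

/-- `μ ∈ M_1(Z)`: finite first moment, `∫ d(z,e) d|μ| < ∞`. -/
def MemM1 (e : Z) (μ : SignedMeasure Z) : Prop :=
  (∫⁻ z, ENNReal.ofReal (dist z e) ∂μ.totalVariation) < ⊤

/-- `μ ∈ M_p(Z)`: finite `p`-th moment, `∫ d(z,e)^p d|μ| < ∞`. -/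
def MemMp (e : Z) (p : ℝ) (μ : SignedMeasure Z) : Prop :=
  (∫⁻ z, ENNReal.ofReal (dist z e ^ p) ∂μ.totalVariation) < ⊤

/-- `∫ (1 + d(z,e)^p) d|μ|` as an extended nonnegative real number. -/
def momLint (e : Z) (p : ℝ) (μ : SignedMeasure Z) : ℝ≥0∞ :=
  ∫⁻ z, ENNReal.ofReal (1 + dist z e ^ p) ∂μ.totalVariation

/-- Dirac measure at a point, as a signed measure. -/
def diracSM (x : Z) : SignedMeasure Z := (Measure.dirac x).toSignedMeasure

/-- The regularizer `G_{α,β}(μ) = α‖μ‖_KRu + β ∫ (1 + d(z,e)^p) d|μ|` if `μ ∈ M_p(Z)`,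
and `+∞` otherwise, as an extended real number. -/
def Gab (e : Z) (p α β : ℝ) (μ : SignedMeasure Z) : EReal :=
  if MemMp e p μ then ((α * kruNorm e μ + β * (momLint e p μ).toReal : ℝ) : EReal) else ⊤

/-- A geodesic metric space: any two points are joined by points realizing all
intermediate distance proportions. -/
def IsGeodesic (Z : Type*) [MetricSpace Z] : Prop :=
  ∀ x y : Z, ∀ t : ℝ, 0 ≤ t → t ≤ 1 →
    ∃ z : Z, dist x z = t * dist x y ∧ dist z y = (1 - t) * dist x y

/-- The Lipschitz constant of a function. -/
def lipConst (f : Z → ℝ) : ℝ :=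
  sInf {K : ℝ | 0 ≤ K ∧ ∀ x y : Z, |f x - f y| ≤ K * dist x y}

/-- The norm on the space of Lipschitz functions: `‖f‖_Lip = max {|f(e)|, L(f)}`. -/
def lipNorm (e : Z) (f : Z → ℝ) : ℝ := max |f e| (lipConst f)


set_option linter.unusedSectionVars false
set_option maxHeartbeats 1000000

lemma coe_mk_eq_ofReal {x : ℝ} (hx : 0 ≤ x) :
    (ENNReal.ofNNReal (NNReal.mk x hx)) = ENNReal.ofReal x := by
  rw [ENNReal.ofReal]
  congr 1
  simp [Real.toNNReal, ← NNReal.coe_inj, max_eq_left hx]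

/-- Jordan minimality: if `σ = a - b` then the positive part is `≤ a` and negative part `≤ b`. -/
lemma jordan_le_of_repr (a b : Measure Z) [IsFiniteMeasure a] [IsFiniteMeasure b]
    (σ : SignedMeasure Z) (h : σ = a.toSignedMeasure - b.toSignedMeasure) :
    σ.toJordanDecomposition.posPart ≤ a ∧ σ.toJordanDecomposition.negPart ≤ b := by
  obtain ⟨i, hi₁, hi₂, hi₃, hp, hn⟩ := σ.toJordanDecomposition_spec
  have key : ∀ (j : Set Z), MeasurableSet j →
      σ (i ∩ j) ≤ (a (i ∩ j)).toReal ∧ -σ (iᶜ ∩ j) ≤ (b (iᶜ ∩ j)).toReal := by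
    intro j hj
    constructor
    · rw [h, Measure.toSignedMeasure_sub_apply (hi₁.inter hj)]
      have := ENNReal.toReal_nonneg (a := b (i ∩ j)); simp only [measureReal_def]; linarith [this]
    · rw [h, Measure.toSignedMeasure_sub_apply (hi₁.compl.inter hj)]
      have := ENNReal.toReal_nonneg (a := a (iᶜ ∩ j)); simp only [measureReal_def]; linarith [this]
  constructor
  · refine Measure.le_iff.2 fun j hj => ?_
    rw [hp, SignedMeasure.toMeasureOfZeroLE_apply _ hi₂ hi₁ hj, coe_mk_eq_ofReal]
    calc ENNReal.ofReal (σ (i ∩ j))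
        ≤ ENNReal.ofReal ((a (i ∩ j)).toReal) := ENNReal.ofReal_le_ofReal (key j hj).1
      _ = a (i ∩ j) := ENNReal.ofReal_toReal (measure_ne_top _ _)
      _ ≤ a j := measure_mono Set.inter_subset_right
  · refine Measure.le_iff.2 fun j hj => ?_
    rw [hn, SignedMeasure.toMeasureOfLEZero_apply _ hi₃ hi₁.compl hj, coe_mk_eq_ofReal]
    calc ENNReal.ofReal (-σ (iᶜ ∩ j))
        ≤ ENNReal.ofReal ((b (iᶜ ∩ j)).toReal) := ENNReal.ofReal_le_ofReal (key j hj).2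
      _ = b (iᶜ ∩ j) := ENNReal.ofReal_toReal (measure_ne_top _ _)
      _ ≤ b j := measure_mono Set.inter_subset_right

/-- Integration against a signed measure through an arbitrary representation. -/
lemma sInteg_repr (a b : Measure Z) [IsFiniteMeasure a] [IsFiniteMeasure b]
    (σ : SignedMeasure Z) (h : σ = a.toSignedMeasure - b.toSignedMeasure)
    (f : Z → ℝ) (hfa : Integrable f a) (hfb : Integrable f b) :
    sInteg σ f = (∫ z, f z ∂a) - ∫ z, f z ∂b := by
  obtain ⟨hpa, hnb⟩ := jordan_le_of_repr a b σ h
  set p := σ.toJordanDecomposition.posPart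
  set n := σ.toJordanDecomposition.negPart
  have hfp : Integrable f p := hfa.mono_measure hpa
  have hfn : Integrable f n := hfb.mono_measure hnb
  have hpn : p + b = a + n := by
    have h2 : p.toSignedMeasure - n.toSignedMeasure = a.toSignedMeasure - b.toSignedMeasure := by
      rw [← h]
      exact σ.toSignedMeasure_toJordanDecomposition
    have h3 : (p + b).toSignedMeasure = (a + n).toSignedMeasure := by
      rw [Measure.toSignedMeasure_add, Measure.toSignedMeasure_add]
      abel_nf
      abel_nf at h2
      linear_combination (norm := abel) h2
    exact Measure.toSignedMeasure_eq_toSignedMeasure_iff.1 h3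
  have h4 : (∫ z, f z ∂p) + (∫ z, f z ∂b) = (∫ z, f z ∂a) + ∫ z, f z ∂n := by
    rw [← integral_add_measure hfp hfb, ← integral_add_measure hfa hfn, hpn]
  simp only [sInteg]
  linarith

set_option linter.unusedSectionVars false

lemma totalVariation_def (σ : SignedMeasure Z) :
    σ.totalVariation = σ.toJordanDecomposition.posPart + σ.toJordanDecomposition.negPart := rfl

lemma repr_self (σ : SignedMeasure Z) :
    σ = σ.toJordanDecomposition.posPart.toSignedMeasure -
      σ.toJordanDecomposition.negPart.toSignedMeasure :=
  (σ.toSignedMeasure_toJordanDecomposition).symm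

lemma tv_le_of_repr (a b : Measure Z) [IsFiniteMeasure a] [IsFiniteMeasure b]
    (σ : SignedMeasure Z) (h : σ = a.toSignedMeasure - b.toSignedMeasure) :
    σ.totalVariation ≤ a + b := by
  obtain ⟨h1, h2⟩ := jordan_le_of_repr a b σ h
  rw [totalVariation_def]
  exact add_le_add h1 h2

lemma integrable_of_lip (e : Z) (m : Measure Z) [IsFiniteMeasure m]
    (hm : (∫⁻ z, ENNReal.ofReal (dist z e) ∂m) < ⊤)
    {f : Z → ℝ} {K : ℝ≥0} (hf : LipschitzWith K f) : Integrable f m := by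
  have hdist : Integrable (fun z => dist z e) m := by
    refine ⟨(continuous_id.dist continuous_const).aestronglyMeasurable, ?_⟩
    rw [hasFiniteIntegral_iff_ofReal (Eventually.of_forall fun z => dist_nonneg)]
    exact hm
  refine Integrable.mono' ((integrable_const |f e|).add (hdist.const_mul K))
    hf.continuous.aestronglyMeasurable (Eventually.of_forall fun z => ?_)
  have h1 : dist (f z) (f e) ≤ K * dist z e := hf.dist_le_mul z e
  rw [Real.dist_eq] at h1
  simp only [Real.norm_eq_abs, Pi.add_apply]
  have h2 : |f z| ≤ |f e| + |f z - f e| := by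
    have := abs_add_le (f e) (f z - f e); simpa using this
  linarith

lemma moment_jordan_lt_top {e : Z} {σ : SignedMeasure Z} (hσ : MemM1 e σ) :
    (∫⁻ z, ENNReal.ofReal (dist z e) ∂σ.toJordanDecomposition.posPart) < ⊤ ∧
    (∫⁻ z, ENNReal.ofReal (dist z e) ∂σ.toJordanDecomposition.negPart) < ⊤ := by
  unfold MemM1 at hσ
  rw [totalVariation_def, lintegral_add_measure] at hσ
  exact ⟨lt_of_le_of_lt le_self_add hσ, lt_of_le_of_lt le_add_self hσ⟩

lemma integrable_jordan (e : Z) {σ : SignedMeasure Z} (hσ : MemM1 e σ)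
    {f : Z → ℝ} {K : ℝ≥0} (hf : LipschitzWith K f) :
    Integrable f σ.toJordanDecomposition.posPart ∧
      Integrable f σ.toJordanDecomposition.negPart :=
  ⟨integrable_of_lip e _ (moment_jordan_lt_top hσ).1 hf,
   integrable_of_lip e _ (moment_jordan_lt_top hσ).2 hf⟩

lemma add_repr (μ ν : SignedMeasure Z) :
    μ + ν = (μ.toJordanDecomposition.posPart + ν.toJordanDecomposition.posPart).toSignedMeasure -
      (μ.toJordanDecomposition.negPart + ν.toJordanDecomposition.negPart).toSignedMeasure := by
  rw [Measure.toSignedMeasure_add, Measure.toSignedMeasure_add]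
  conv_lhs => rw [repr_self μ, repr_self ν]
  abel

lemma sInteg_add (e : Z) {μ ν : SignedMeasure Z} (hμ : MemM1 e μ) (hν : MemM1 e ν)
    {f : Z → ℝ} {K : ℝ≥0} (hf : LipschitzWith K f) :
    sInteg (μ + ν) f = sInteg μ f + sInteg ν f := by
  obtain ⟨hμp, hμn⟩ := integrable_jordan e hμ hf
  obtain ⟨hνp, hνn⟩ := integrable_jordan e hν hf
  rw [sInteg_repr _ _ _ (add_repr μ ν) f (hμp.add_measure hνp) (hμn.add_measure hνn),
    integral_add_measure hμp hνp, integral_add_measure hμn hνn]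
  unfold sInteg; ring

lemma nnreal_smul_measure_eq (r : ℝ≥0) (m : Measure Z) : r • m = (r : ℝ≥0∞) • m := by
  ext s hs
  rw [Measure.coe_nnreal_smul_apply, Measure.smul_apply, smul_eq_mul]

lemma max_sub_max_neg (c : ℝ) : max c 0 - max (-c) 0 = c := by
  rcases le_total 0 c with hc | hc
  · rw [max_eq_left hc, max_eq_right (neg_nonpos.2 hc)]; ring
  · rw [max_eq_right hc, max_eq_left (neg_nonneg.2 hc)]; ring

lemma smul_repr (c : ℝ) (σ : SignedMeasure Z) :
    c • σ = (c.toNNReal • σ.toJordanDecomposition.posPart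
        + (-c).toNNReal • σ.toJordanDecomposition.negPart).toSignedMeasure -
      (c.toNNReal • σ.toJordanDecomposition.negPart
        + (-c).toNNReal • σ.toJordanDecomposition.posPart).toSignedMeasure := by
  ext s hs
  rw [VectorMeasure.smul_apply, Measure.toSignedMeasure_sub_apply hs]
  conv_lhs => rw [repr_self σ]
  rw [VectorMeasure.sub_apply, Measure.toSignedMeasure_apply_measurable hs,
    Measure.toSignedMeasure_apply_measurable hs]
  simp only [measureReal_def, Measure.add_apply, Measure.coe_nnreal_smul_apply]
  set P := σ.toJordanDecomposition.posPart s with hPdef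
  set N := σ.toJordanDecomposition.negPart s with hNdef
  have hP : P ≠ ⊤ := measure_ne_top _ _
  have hN : N ≠ ⊤ := measure_ne_top _ _
  have e1 : ∀ (r : ℝ≥0) (X : ℝ≥0∞), X ≠ ⊤ → ((r : ℝ≥0∞) * X).toReal = (r : ℝ) * X.toReal := by
    intro r X hX
    rw [ENNReal.toReal_mul, ENNReal.coe_toReal]
  rw [ENNReal.toReal_add (by exact ENNReal.mul_ne_top ENNReal.coe_ne_top hP)
      (by exact ENNReal.mul_ne_top ENNReal.coe_ne_top hN),
    ENNReal.toReal_add (by exact ENNReal.mul_ne_top ENNReal.coe_ne_top hN)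
      (by exact ENNReal.mul_ne_top ENNReal.coe_ne_top hP),
    e1 _ _ hP, e1 _ _ hN, e1 _ _ hN, e1 _ _ hP]
  simp only [Real.coe_toNNReal']
  have hmax : (c ⊔ 0) - ((-c) ⊔ 0) = c := max_sub_max_neg c
  rw [smul_eq_mul]
  linear_combination (N.toReal - P.toReal) * hmax

lemma memM1_of_le {e : Z} {σ : SignedMeasure Z} (m : Measure Z)
    (h : σ.totalVariation ≤ m)
    (hm : (∫⁻ z, ENNReal.ofReal (dist z e) ∂m) < ⊤) : MemM1 e σ :=
  lt_of_le_of_lt (lintegral_mono' h le_rfl) hm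

lemma memM1_add {e : Z} {μ ν : SignedMeasure Z} (hμ : MemM1 e μ) (hν : MemM1 e ν) :
    MemM1 e (μ + ν) := by
  refine memM1_of_le (μ.totalVariation + ν.totalVariation) ?_ ?_
  · have := tv_le_of_repr _ _ _ (add_repr μ ν)
    rw [totalVariation_def μ, totalVariation_def ν]
    calc (μ + ν).totalVariation ≤ _ := this
      _ = _ := add_add_add_comm _ _ _ _
  · rw [lintegral_add_measure]
    exact ENNReal.add_lt_top.2 ⟨hμ, hν⟩

lemma integrable_nnreal_smul {f : Z → ℝ} (r : ℝ≥0) {m : Measure Z} (hm : Integrable f m) :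
    Integrable f (r • m) := by
  rw [nnreal_smul_measure_eq]
  exact hm.smul_measure ENNReal.coe_ne_top

lemma lintegral_nnreal_smul_lt_top {g : Z → ℝ≥0∞} (r : ℝ≥0) {m : Measure Z}
    (hm : (∫⁻ z, g z ∂m) < ⊤) : (∫⁻ z, g z ∂(r • m)) < ⊤ := by
  rw [nnreal_smul_measure_eq, lintegral_smul_measure]
  exact ENNReal.mul_lt_top ENNReal.coe_lt_top hm

lemma memM1_smul {e : Z} (c : ℝ) {σ : SignedMeasure Z} (hσ : MemM1 e σ) :
    MemM1 e (c • σ) := by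
  obtain ⟨h1, h2⟩ := moment_jordan_lt_top hσ
  refine memM1_of_le _ (tv_le_of_repr _ _ _ (smul_repr c σ)) ?_
  simp only [lintegral_add_measure]
  exact ENNReal.add_lt_top.2
    ⟨ENNReal.add_lt_top.2 ⟨lintegral_nnreal_smul_lt_top _ h1, lintegral_nnreal_smul_lt_top _ h2⟩,
     ENNReal.add_lt_top.2 ⟨lintegral_nnreal_smul_lt_top _ h2, lintegral_nnreal_smul_lt_top _ h1⟩⟩

lemma memM1_neg {e : Z} {σ : SignedMeasure Z} (hσ : MemM1 e σ) : MemM1 e (-σ) := by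
  unfold MemM1
  rw [SignedMeasure.totalVariation_neg]
  exact hσ

lemma memM1_sub {e : Z} {μ ν : SignedMeasure Z} (hμ : MemM1 e μ) (hν : MemM1 e ν) :
    MemM1 e (μ - ν) := by
  rw [sub_eq_add_neg]
  exact memM1_add hμ (memM1_neg hν)

lemma sInteg_smul (e : Z) (c : ℝ) {σ : SignedMeasure Z} (hσ : MemM1 e σ)
    {f : Z → ℝ} {K : ℝ≥0} (hf : LipschitzWith K f) :
    sInteg (c • σ) f = c * sInteg σ f := by
  obtain ⟨hp, hn⟩ := integrable_jordan e hσ hf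
  rw [sInteg_repr _ _ _ (smul_repr c σ) f
      ((integrable_nnreal_smul _ hp).add_measure (integrable_nnreal_smul _ hn))
      ((integrable_nnreal_smul _ hn).add_measure (integrable_nnreal_smul _ hp)),
    integral_add_measure (integrable_nnreal_smul _ hp) (integrable_nnreal_smul _ hn),
    integral_add_measure (integrable_nnreal_smul _ hn) (integrable_nnreal_smul _ hp),
    integral_smul_nnreal_measure, integral_smul_nnreal_measure,
    integral_smul_nnreal_measure, integral_smul_nnreal_measure]
  unfold sInteg
  set Ip := ∫ z, f z ∂σ.toJordanDecomposition.posPart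
  set In := ∫ z, f z ∂σ.toJordanDecomposition.negPart
  simp only [NNReal.smul_def, smul_eq_mul, Real.coe_toNNReal']
  have hmax : (c ⊔ 0) - ((-c) ⊔ 0) = c := max_sub_max_neg c
  linear_combination (Ip - In) * hmax

lemma sInteg_sub (e : Z) {μ ν : SignedMeasure Z} (hμ : MemM1 e μ) (hν : MemM1 e ν)
    {f : Z → ℝ} {K : ℝ≥0} (hf : LipschitzWith K f) :
    sInteg (μ - ν) f = sInteg μ f - sInteg ν f := by
  rw [sub_eq_add_neg, ← neg_one_smul ℝ ν, sInteg_add e hμ (memM1_smul (-1) hν) hf,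
    sInteg_smul e (-1) hν hf]
  ring

lemma diracSM_repr (x : Z) :
    diracSM x = (Measure.dirac x).toSignedMeasure - (0 : Measure Z).toSignedMeasure := by
  rw [Measure.toSignedMeasure_zero, sub_zero]
  rfl

lemma measurable_ofReal_dist (e : Z) : Measurable (fun z : Z => ENNReal.ofReal (dist z e)) :=
  ((continuous_id.dist continuous_const).measurable).ennreal_ofReal

lemma memM1_diracSM (e x : Z) : MemM1 e (diracSM x) := by
  refine memM1_of_le (Measure.dirac x + 0) (tv_le_of_repr _ _ _ (diracSM_repr x)) ?_
  rw [add_zero, lintegral_dirac' _ (measurable_ofReal_dist e)]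
  exact ENNReal.ofReal_lt_top

lemma integrable_dirac_lip {f : Z → ℝ} {K : ℝ≥0} (hf : LipschitzWith K f) (x : Z) :
    Integrable f (Measure.dirac x) :=
  integrable_of_lip x _
    (by rw [lintegral_dirac' _ (measurable_ofReal_dist x)]; exact ENNReal.ofReal_lt_top) hf

lemma sInteg_diracSM {f : Z → ℝ} {K : ℝ≥0} (hf : LipschitzWith K f) (x : Z) :
    sInteg (diracSM x) f = f x := by
  rw [sInteg_repr _ _ _ (diracSM_repr x) f (integrable_dirac_lip hf x) (integrable_zero_measure (f := f))]
  rw [integral_dirac' f x hf.continuous.stronglyMeasurable, integral_zero_measure, sub_zero]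

lemma sm_apply_eq (σ : SignedMeasure Z) {s : Set Z} (hs : MeasurableSet s) :
    σ s = (σ.toJordanDecomposition.posPart s).toReal
      - (σ.toJordanDecomposition.negPart s).toReal := by
  conv_lhs => rw [repr_self σ]
  exact Measure.toSignedMeasure_sub_apply hs

def Sset (e : Z) (μ : SignedMeasure Z) : Set ℝ :=
  {r : ℝ | ∃ f : Z → ℝ, f e = 0 ∧ LipschitzWith 1 f ∧ r = sInteg μ f}

lemma zero_mem_Sset (e : Z) (μ : SignedMeasure Z) : (0 : ℝ) ∈ Sset e μ := by
  refine ⟨fun _ => 0, rfl, (LipschitzWith.const 0).weaken zero_le_one, ?_⟩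
  unfold sInteg
  simp

/-- `(∫ d(z,e) d|μ|).toReal`, a uniform bound for elements of `Sset`. -/
def M1Real (e : Z) (μ : SignedMeasure Z) : ℝ :=
  (∫⁻ z, ENNReal.ofReal (dist z e) ∂μ.totalVariation).toReal

lemma abs_le_of_lip_zero {e : Z} {μ : SignedMeasure Z} (hμ : MemM1 e μ)
    {g : Z → ℝ} (hge : g e = 0) (hg : LipschitzWith 1 g) :
    |sInteg μ g| ≤ M1Real e μ := by
  obtain ⟨h1, h2⟩ := moment_jordan_lt_top hμ
  have hbd : ∀ z : Z, ENNReal.ofReal ‖g z‖ ≤ ENNReal.ofReal (dist z e) := by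
    intro z
    refine ENNReal.ofReal_le_ofReal ?_
    have := hg.dist_le_mul z e
    rw [Real.dist_eq, hge, sub_zero] at this
    simpa [Real.norm_eq_abs] using this
  have key : ∀ (m : Measure Z), (∫⁻ z, ENNReal.ofReal (dist z e) ∂m) < ⊤ →
      |∫ z, g z ∂m| ≤ (∫⁻ z, ENNReal.ofReal (dist z e) ∂m).toReal := by
    intro m hm
    calc |∫ z, g z ∂m| = ‖∫ z, g z ∂m‖ := rfl
      _ ≤ (∫⁻ z, ENNReal.ofReal ‖g z‖ ∂m).toReal := norm_integral_le_lintegral_norm _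
      _ ≤ (∫⁻ z, ENNReal.ofReal (dist z e) ∂m).toReal := by
          exact ENNReal.toReal_mono hm.ne (lintegral_mono hbd)
  have := abs_sub (sInteg μ g) 0
  unfold sInteg
  unfold M1Real
  rw [totalVariation_def, lintegral_add_measure,
    ENNReal.toReal_add h1.ne h2.ne]
  calc |(∫ z, g z ∂μ.toJordanDecomposition.posPart) - ∫ z, g z ∂μ.toJordanDecomposition.negPart|
      ≤ |∫ z, g z ∂μ.toJordanDecomposition.posPart| + |∫ z, g z ∂μ.toJordanDecomposition.negPart| :=
        abs_sub _ _
    _ ≤ _ := add_le_add (key _ h1) (key _ h2)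

lemma bddAbove_Sset {e : Z} {μ : SignedMeasure Z} (hμ : MemM1 e μ) : BddAbove (Sset e μ) := by
  refine ⟨M1Real e μ, fun r hr => ?_⟩
  obtain ⟨g, hge, hg, rfl⟩ := hr
  exact (abs_le.1 (abs_le_of_lip_zero hμ hge hg)).2

lemma sSup_Sset_nonneg {e : Z} {μ : SignedMeasure Z} (hμ : MemM1 e μ) :
    0 ≤ sSup (Sset e μ) :=
  le_csSup (bddAbove_Sset hμ) (zero_mem_Sset e μ)

lemma lipConst_nonneg {f : Z → ℝ} : 0 ≤ lipConst f :=
  Real.sInf_nonneg fun _ hx => hx.1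

lemma lipConst_le {f : Z → ℝ} {C : ℝ} (h0 : 0 ≤ C)
    (h : ∀ x y : Z, |f x - f y| ≤ C * dist x y) : lipConst f ≤ C :=
  csInf_le ⟨0, fun _ hK => hK.1⟩ ⟨h0, h⟩

lemma mem_lipSet_of_lip {f : Z → ℝ} {K : ℝ≥0} (hK : LipschitzWith K f) :
    (K : ℝ) ∈ {K : ℝ | 0 ≤ K ∧ ∀ x y : Z, |f x - f y| ≤ K * dist x y} :=
  ⟨K.coe_nonneg, fun x y => by simpa [Real.dist_eq] using hK.dist_le_mul x y⟩

lemma lipConst_is_lip {f : Z → ℝ} (hf : ∃ K : ℝ≥0, LipschitzWith K f) (x y : Z) :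
    |f x - f y| ≤ lipConst f * dist x y := by
  obtain ⟨K, hK⟩ := hf
  rcases eq_or_ne x y with rfl | hxy
  · simp
  · have hd : 0 < dist x y := dist_pos.2 hxy
    have h1 : |f x - f y| / dist x y ≤ lipConst f := by
      refine le_csInf ⟨(K : ℝ), mem_lipSet_of_lip hK⟩ fun b hb => ?_
      rw [div_le_iff₀ hd]
      exact hb.2 x y
    calc |f x - f y| = |f x - f y| / dist x y * dist x y := by field_simp
      _ ≤ lipConst f * dist x y := mul_le_mul_of_nonneg_right h1 hd.le

lemma kruNorm_eq (e : Z) (μ : SignedMeasure Z) :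
    kruNorm e μ = |μ Set.univ| + sSup (Sset e μ) := rfl

lemma sInteg_split (e : Z) {μ : SignedMeasure Z} (hμ : MemM1 e μ)
    {f : Z → ℝ} {K : ℝ≥0} (hf : LipschitzWith K f) :
    sInteg μ f = sInteg μ (fun z => f z - f e) + f e * μ Set.univ := by
  obtain ⟨hp, hn⟩ := integrable_jordan e hμ hf
  unfold sInteg
  rw [sm_apply_eq μ MeasurableSet.univ,
    integral_sub hp (integrable_const _), integral_sub hn (integrable_const _),
    integral_const, integral_const]
  simp only [smul_eq_mul, measureReal_def]
  ring

lemma part_i_bound (e : Z) {f : Z → ℝ} (hf : ∃ K : ℝ≥0, LipschitzWith K f)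
    {μ : SignedMeasure Z} (hμ : MemM1 e μ) :
    |sInteg μ f| ≤ lipNorm e f * kruNorm e μ := by
  obtain ⟨K, hK⟩ := hf
  set L := lipConst f with hLdef
  set g := fun z => f z - f e with hgdef
  have hge : g e = 0 := sub_self _
  have hgLip0 : ∀ x y, |g x - g y| ≤ L * dist x y := fun x y => by
    simpa [hgdef] using lipConst_is_lip ⟨K, hK⟩ x y
  have hLnn : 0 ≤ L := lipConst_nonneg
  have hbound : |sInteg μ g| ≤ L * sSup (Sset e μ) := by
    rcases eq_or_lt_of_le hLnn with hL0 | hLpos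
    · have hz : ∀ z, g z = 0 := fun z => by
        have h := hgLip0 z e
        rw [hge, sub_zero, ← hL0, zero_mul] at h
        exact abs_eq_zero.1 (le_antisymm h (abs_nonneg _))
      have : g = fun _ => (0 : ℝ) := funext hz
      rw [this]
      unfold sInteg
      simp [← hL0]
    · set g1 := fun z => g z / L with hg1def
      have hg1e : g1 e = 0 := by simp [hg1def, hge]
      have hg1 : LipschitzWith 1 g1 := by
        refine LipschitzWith.of_dist_le_mul fun x y => ?_
        rw [Real.dist_eq, NNReal.coe_one, one_mul]
        have : g1 x - g1 y = (g x - g y) / L := by rw [hg1def]; ring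
        rw [this, abs_div, abs_of_pos hLpos, div_le_iff₀ hLpos]
        calc |g x - g y| ≤ L * dist x y := hgLip0 x y
          _ = dist x y * L := mul_comm _ _
      have hL : sInteg μ g = L * sInteg μ g1 := by
        have hgg : g = fun z => L * g1 z := funext fun z => by
          rw [hg1def]; field_simp
        rw [hgg]
        unfold sInteg
        rw [integral_const_mul L _, integral_const_mul L _]
        ring
      rw [hL, abs_mul, abs_of_nonneg hLnn]
      refine mul_le_mul_of_nonneg_left ?_ hLnn
      rw [abs_le]
      constructor
      · have hmem : -sInteg μ g1 ∈ Sset e μ := by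
          refine ⟨fun z => -g1 z, by simp [hg1e], hg1.neg, ?_⟩
          unfold sInteg
          rw [integral_neg, integral_neg]
          ring
        have := le_csSup (bddAbove_Sset hμ) hmem
        linarith
      · exact le_csSup (bddAbove_Sset hμ) ⟨g1, hg1e, hg1, rfl⟩
  have hsplit := sInteg_split e hμ hK
  have h1 : |sInteg μ f| ≤ L * sSup (Sset e μ) + |f e| * |μ Set.univ| := by
    rw [hsplit]
    calc |sInteg μ (fun z => f z - f e) + f e * μ Set.univ|
        ≤ |sInteg μ (fun z => f z - f e)| + |f e * μ Set.univ| := abs_add_le _ _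
      _ ≤ L * sSup (Sset e μ) + |f e| * |μ Set.univ| := by
          rw [abs_mul]
          exact add_le_add hbound le_rfl
  have h2 : |f e| ≤ lipNorm e f := le_max_left _ _
  have h3 : L ≤ lipNorm e f := le_max_right _ _
  have h4 : 0 ≤ sSup (Sset e μ) := sSup_Sset_nonneg hμ
  have h5 : 0 ≤ |μ Set.univ| := abs_nonneg _
  rw [kruNorm_eq]
  nlinarith [mul_le_mul_of_nonneg_right h2 h5, mul_le_mul_of_nonneg_right h3 h4]

lemma diracSM_univ (x : Z) : diracSM x Set.univ = 1 := by
  unfold diracSM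
  rw [Measure.toSignedMeasure_apply_measurable MeasurableSet.univ]
  simp

lemma kruNorm_diracSM_base (e : Z) : kruNorm e (diracSM e) ≤ 1 := by
  rw [kruNorm_eq, diracSM_univ]
  have : sSup (Sset e (diracSM e)) ≤ 0 := by
    refine Real.sSup_le (fun r hr => ?_) le_rfl
    obtain ⟨g, hge, hg, rfl⟩ := hr
    rw [sInteg_diracSM hg e, hge]
  simp only [abs_one]
  linarith

lemma kruNorm_dirac_sub_le (e x y : Z) :
    kruNorm e (diracSM x - diracSM y) ≤ dist x y := by
  rw [kruNorm_eq]
  have hmass : (diracSM x - diracSM y) Set.univ = 0 := by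
    rw [VectorMeasure.sub_apply, diracSM_univ, diracSM_univ, sub_self]
  have hsup : sSup (Sset e (diracSM x - diracSM y)) ≤ dist x y := by
    refine Real.sSup_le (fun r hr => ?_) dist_nonneg
    obtain ⟨g, hge, hg, rfl⟩ := hr
    rw [sInteg_sub e (memM1_diracSM e x) (memM1_diracSM e y) hg,
      sInteg_diracSM hg x, sInteg_diracSM hg y]
    have := hg.dist_le_mul x y
    rw [Real.dist_eq, NNReal.coe_one, one_mul] at this
    exact (abs_le.1 this).2
  rw [hmass]
  simpa using hsup

lemma memM1_zero (e : Z) : MemM1 e (0 : SignedMeasure Z) := by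
  unfold MemM1
  rw [SignedMeasure.totalVariation_zero]
  simp

lemma sInteg_zero (f : Z → ℝ) : sInteg (0 : SignedMeasure Z) f = 0 := by
  unfold sInteg
  rw [SignedMeasure.toJordanDecomposition_zero]
  simp

lemma memM1_finsum {e : Z} {ι : Type*} (s : Finset ι) (σ : ι → SignedMeasure Z)
    (h : ∀ i ∈ s, MemM1 e (σ i)) : MemM1 e (∑ i ∈ s, σ i) := by
  classical
  induction s using Finset.induction_on with
  | empty => simpa using memM1_zero e
  | insert _ _ hx ih =>
      rw [Finset.sum_insert hx]
      exact memM1_add (h _ (Finset.mem_insert_self _ _))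
        (ih fun i hi => h i (Finset.mem_insert_of_mem hi))

lemma sInteg_finsum {e : Z} {ι : Type*} (s : Finset ι) (σ : ι → SignedMeasure Z)
    (h : ∀ i ∈ s, MemM1 e (σ i)) {f : Z → ℝ} {K : ℝ≥0} (hf : LipschitzWith K f) :
    sInteg (∑ i ∈ s, σ i) f = ∑ i ∈ s, sInteg (σ i) f := by
  classical
  induction s using Finset.induction_on with
  | empty => simpa using sInteg_zero f
  | insert _ _ hx ih =>
      rw [Finset.sum_insert hx, Finset.sum_insert hx,
        sInteg_add e (h _ (Finset.mem_insert_self _ _))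
          (memM1_finsum _ _ fun i hi => h i (Finset.mem_insert_of_mem hi)) hf,
        ih fun i hi => h i (Finset.mem_insert_of_mem hi)]

lemma sm_finsum_apply {ι : Type*} (s : Finset ι) (σ : ι → SignedMeasure Z) (A : Set Z) :
    (∑ i ∈ s, σ i) A = ∑ i ∈ s, σ i A := by
  classical
  induction s using Finset.induction_on with
  | empty => simp
  | insert _ _ hx ih =>
      rw [Finset.sum_insert hx, Finset.sum_insert hx, VectorMeasure.add_apply, ih]

lemma exists_partition [TopologicalSpace.SeparableSpace Z] (e : Z) {δ : ℝ} (hδ : 0 < δ) :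
    ∃ (u : ℕ → Z) (B : ℕ → Set Z),
      (∀ i, MeasurableSet (B i)) ∧ Pairwise (Function.onFun Disjoint B) ∧
      (∀ i, B i ⊆ Metric.ball (u i) δ) ∧ (⋃ i, B i) = Set.univ := by
  haveI : Nonempty Z := ⟨e⟩
  refine ⟨TopologicalSpace.denseSeq Z,
    disjointed (fun i => Metric.ball (TopologicalSpace.denseSeq Z i) δ),
    MeasurableSet.disjointed (fun i => measurableSet_ball), disjoint_disjointed _,
    fun i => disjointed_subset _ i, ?_⟩
  rw [iUnion_disjointed]
  ext z
  simp only [Set.mem_iUnion, Set.mem_univ, iff_true]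
  obtain ⟨i, hi⟩ := (TopologicalSpace.denseRange_denseSeq Z).exists_dist_lt z hδ
  exact ⟨i, by rw [Metric.mem_ball]; exact hi⟩

lemma discrete_approx [TopologicalSpace.SeparableSpace Z] (e : Z) {μ : SignedMeasure Z}
    (hμ : MemM1 e μ) {ε : ℝ} (hε : 0 < ε) :
    ∃ (N : ℕ) (u : ℕ → Z) (c : ℕ → ℝ),
      kruNorm e (μ - ∑ i ∈ Finset.range N, c i • diracSM (u i)) ≤ ε := by
  classical
  set p := μ.toJordanDecomposition.posPart with hp
  set n := μ.toJordanDecomposition.negPart with hn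
  set τ := μ.totalVariation with hτdef
  haveI : IsFiniteMeasure τ := by rw [hτdef, totalVariation_def]; infer_instance
  set H : Z → ℝ≥0∞ := fun z => 1 + ENNReal.ofReal (dist z e) with hHdef
  have hHτ : (∫⁻ z, H z ∂τ) < ⊤ := by
    rw [hHdef]
    rw [lintegral_add_left measurable_const, lintegral_one]
    exact ENNReal.add_lt_top.2 ⟨measure_lt_top τ _, hμ⟩
  set tv := (τ Set.univ).toReal with htvdef
  have htvnn : 0 ≤ tv := ENNReal.toReal_nonneg
  set δ := ε / (2 * (tv + 1)) with hδdef
  have hδpos : 0 < δ := div_pos hε (by positivity)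
  obtain ⟨u, B, hBmeas, hBdisj, hBsub, hBcover⟩ := exists_partition e hδpos
  set m := fun i => ∫⁻ z in B i, H z ∂τ with hmdef
  have hmsum : ∑' i, m i = ∫⁻ z, H z ∂τ := by
    rw [hmdef, ← lintegral_iUnion hBmeas hBdisj, hBcover, Measure.restrict_univ]
  obtain ⟨N, hN⟩ : ∃ N, (∑' i, m (i + N)) < ENNReal.ofReal (ε / 4) := by
    have h1 : Tendsto (fun N => ∑' i, m (i + N)) atTop (𝓝 0) :=
      ENNReal.tendsto_sum_nat_add m (by rw [hmsum]; exact hHτ.ne)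
    exact (h1.eventually_lt_const (ENNReal.ofReal_pos.2 (by positivity))).exists
  set U := ⋃ i ∈ Finset.range N, B i with hUdef
  have hUmeas : MeasurableSet U :=
    MeasurableSet.biUnion (Finset.range N).countable_toSet fun i _ => hBmeas i
  set T := Uᶜ with hTdef
  have hTmeas : MeasurableSet T := hUmeas.compl
  have hTeq : T = ⋃ i, B (i + N) := by
    ext z
    have hz : ∃ k, z ∈ B k := Set.mem_iUnion.1 (by rw [hBcover]; trivial)
    rw [hTdef, Set.mem_compl_iff]
    constructor
    · intro hzU
      obtain ⟨k, hk⟩ := hz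
      have hkN : N ≤ k := by
        by_contra hlt
        exact hzU (Set.mem_biUnion (Finset.mem_range.2 (lt_of_not_ge hlt)) hk)
      exact Set.mem_iUnion.2 ⟨k - N, by rwa [Nat.sub_add_cancel hkN]⟩
    · intro hzT hzU
      obtain ⟨i, hi⟩ := Set.mem_iUnion.1 hzT
      obtain ⟨j, hj, hjz⟩ := Set.mem_iUnion₂.1 hzU
      have hne : j ≠ i + N := by
        have := Finset.mem_range.1 hj
        omega
      exact (hBdisj hne).le_bot ⟨hjz, hi⟩
  have hTtail : (∫⁻ z in T, H z ∂τ) < ENNReal.ofReal (ε / 4) := by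
    rw [hTeq, lintegral_iUnion (s := fun i => B (i + N)) (fun i => hBmeas _)
      (fun i j hij => hBdisj (by omega))]
    exact hN
  have hτT : τ T ≤ ENNReal.ofReal (ε / 4) := by
    calc τ T = ∫⁻ _ in T, 1 ∂τ := (setLIntegral_one T).symm
      _ ≤ ∫⁻ z in T, H z ∂τ := lintegral_mono fun z => le_add_of_nonneg_right zero_le
      _ ≤ ENNReal.ofReal (ε / 4) := hTtail.le
  have hτTreal : (τ T).toReal ≤ ε / 4 := by
    have h1 := ENNReal.toReal_mono ENNReal.ofReal_ne_top hτT
    rwa [ENNReal.toReal_ofReal (by positivity)] at h1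
  set c := fun i => μ (B i) with hcdef
  set ν := ∑ i ∈ Finset.range N, c i • diracSM (u i) with hνdef
  have hνM1 : MemM1 e ν := memM1_finsum _ _ fun i _ => memM1_smul _ (memM1_diracSM e (u i))
  refine ⟨N, u, c, ?_⟩
  rw [kruNorm_eq]
  have hsplitm : ∀ q : Measure Z, IsFiniteMeasure q →
      (q Set.univ).toReal = (∑ i ∈ Finset.range N, (q (B i)).toReal) + (q T).toReal := by
    intro q hq
    haveI := hq
    have h1 : q U = ∑ i ∈ Finset.range N, q (B i) :=
      measure_biUnion_finset (fun i _ j _ hij => hBdisj hij) (fun i _ => hBmeas i)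
    have h2 : q U + q T = q Set.univ := by
      rw [hTdef]; exact measure_add_measure_compl hUmeas
    rw [← h2, ENNReal.toReal_add (measure_ne_top _ _) (measure_ne_top _ _), h1,
      ENNReal.toReal_sum fun i _ => measure_ne_top _ _]
  have hc_eq : ∀ i, c i = (p (B i)).toReal - (n (B i)).toReal := fun i =>
    sm_apply_eq μ (hBmeas i)
  have hτsplit : ∀ s : Set Z, τ s = p s + n s := by
    intro s
    rw [hτdef, totalVariation_def, Measure.add_apply]
  -- mass estimate
  have hmass : |(μ - ν) Set.univ| ≤ ε / 4 := by
    have hν_univ : ν Set.univ = ∑ i ∈ Finset.range N, c i := by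
      rw [hνdef, sm_finsum_apply]
      refine Finset.sum_congr rfl fun i _ => ?_
      rw [VectorMeasure.smul_apply, diracSM_univ, smul_eq_mul, mul_one]
    have hμ_univ : μ Set.univ = (p Set.univ).toReal - (n Set.univ).toReal :=
      sm_apply_eq μ MeasurableSet.univ
    have hdiff : (μ - ν) Set.univ = (p T).toReal - (n T).toReal := by
      rw [VectorMeasure.sub_apply, hν_univ, hμ_univ, hsplitm p inferInstance,
        hsplitm n inferInstance]
      simp only [hc_eq, Finset.sum_sub_distrib]
      ring
    rw [hdiff]
    have h1 : |(p T).toReal - (n T).toReal| ≤ (τ T).toReal := by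
      rw [hτsplit T, ENNReal.toReal_add (measure_ne_top _ _) (measure_ne_top _ _)]
      have h2 := abs_sub (p T).toReal (n T).toReal
      rwa [abs_of_nonneg ENNReal.toReal_nonneg, abs_of_nonneg ENNReal.toReal_nonneg] at h2
    linarith
  -- sup estimate
  have hsup : sSup (Sset e (μ - ν)) ≤ ε / 2 + ε / 4 := by
    refine Real.sSup_le (fun r hr => ?_) (by linarith)
    obtain ⟨g, hge, hg, rfl⟩ := hr
    obtain ⟨hgp, hgn⟩ := integrable_jordan e hμ hg
    have hνint : sInteg ν g = ∑ i ∈ Finset.range N, c i * g (u i) := by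
      rw [hνdef, sInteg_finsum _ _ (fun i _ => memM1_smul _ (memM1_diracSM e (u i))) hg]
      refine Finset.sum_congr rfl fun i _ => ?_
      rw [sInteg_smul e _ (memM1_diracSM e (u i)) hg, sInteg_diracSM hg (u i)]
    have hdecomp : ∀ q : Measure Z, IsFiniteMeasure q → Integrable g q →
        (∫ z, g z ∂q) = (∑ i ∈ Finset.range N, ∫ z in B i, g z ∂q) + ∫ z in T, g z ∂q := by
      intro q hq hint
      haveI := hq
      have h1 : (∫ z in U, g z ∂q) + ∫ z in T, g z ∂q = ∫ z, g z ∂q := by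
        rw [hTdef]; exact integral_add_compl hUmeas hint
      have h2 : (∫ z in U, g z ∂q) = ∑ i ∈ Finset.range N, ∫ z in B i, g z ∂q := by
        rw [hUdef]
        exact integral_biUnion_finset _ (fun i _ => hBmeas i)
          (fun i _ j _ hij => hBdisj hij) (fun i _ => hint.integrableOn)
      rw [← h1, h2]
    have hpiece : ∀ q : Measure Z, IsFiniteMeasure q → Integrable g q → ∀ i,
        |(∫ z in B i, g z ∂q) - (q (B i)).toReal * g (u i)| ≤ δ * (q (B i)).toReal := by
      intro q hq hint i
      haveI := hq
      have h1 : (∫ z in B i, g z ∂q) - (q (B i)).toReal * g (u i)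
          = ∫ z in B i, (g z - g (u i)) ∂q := by
        rw [integral_sub hint.integrableOn (integrableOn_const (measure_lt_top _ _).ne),
          setIntegral_const, smul_eq_mul, measureReal_def]
      rw [h1]
      have h2 : ∀ᵐ z ∂q, z ∈ B i → ‖g z - g (u i)‖ ≤ δ := by
        refine Eventually.of_forall fun z hz => ?_
        have hd : dist z (u i) < δ := Metric.mem_ball.1 (hBsub i hz)
        have h3 := hg.dist_le_mul z (u i)
        rw [Real.dist_eq, NNReal.coe_one, one_mul] at h3
        rw [Real.norm_eq_abs]
        linarith
      exact norm_setIntegral_le_of_norm_le_const_ae' (measure_lt_top _ _) h2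
    have hgz : ∀ z, ENNReal.ofReal ‖g z‖ ≤ H z := by
      intro z
      rw [hHdef]
      refine le_trans (ENNReal.ofReal_le_ofReal ?_) le_add_self
      have h3 := hg.dist_le_mul z e
      rw [Real.dist_eq, hge, sub_zero, NNReal.coe_one, one_mul] at h3
      simpa [Real.norm_eq_abs] using h3
    have htailq : ∀ q : Measure Z, q ≤ τ → Integrable g q →
        |∫ z in T, g z ∂q| ≤ (∫⁻ z in T, H z ∂q).toReal := by
      intro q hq hint
      have hfin : (∫⁻ z in T, H z ∂q) < ⊤ := by
        refine lt_of_le_of_lt ?_ (lt_trans hTtail ENNReal.ofReal_lt_top)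
        exact lintegral_mono' (Measure.restrict_mono subset_rfl hq) le_rfl
      calc |∫ z in T, g z ∂q| = ‖∫ z in T, g z ∂q‖ := rfl
        _ ≤ (∫⁻ z in T, ENNReal.ofReal ‖g z‖ ∂q).toReal := norm_integral_le_lintegral_norm _
        _ ≤ (∫⁻ z in T, H z ∂q).toReal :=
            ENNReal.toReal_mono hfin.ne (lintegral_mono fun z => hgz z)
    have hple : p ≤ τ := by
      rw [hτdef, totalVariation_def]; exact Measure.le_add_right le_rfl
    have hnle : n ≤ τ := by
      rw [hτdef, totalVariation_def]; exact Measure.le_add_left le_rfl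
    have key : sInteg (μ - ν) g
        = ((∑ i ∈ Finset.range N, ((∫ z in B i, g z ∂p) - (p (B i)).toReal * g (u i)))
          - ∑ i ∈ Finset.range N, ((∫ z in B i, g z ∂n) - (n (B i)).toReal * g (u i)))
          + ((∫ z in T, g z ∂p) - ∫ z in T, g z ∂n) := by
      rw [sInteg_sub e hμ hνM1 hg, hνint]
      have hμg : sInteg μ g = (∫ z, g z ∂p) - ∫ z, g z ∂n := rfl
      rw [hμg, hdecomp p inferInstance hgp, hdecomp n inferInstance hgn]
      simp only [hc_eq, Finset.sum_sub_distrib, sub_mul]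
      ring
    have hSp : |∑ i ∈ Finset.range N, ((∫ z in B i, g z ∂p) - (p (B i)).toReal * g (u i))|
        ≤ δ * (p Set.univ).toReal := by
      calc |∑ i ∈ Finset.range N, ((∫ z in B i, g z ∂p) - (p (B i)).toReal * g (u i))|
          ≤ ∑ i ∈ Finset.range N, |(∫ z in B i, g z ∂p) - (p (B i)).toReal * g (u i)| :=
            Finset.abs_sum_le_sum_abs _ _
        _ ≤ ∑ i ∈ Finset.range N, δ * (p (B i)).toReal :=
            Finset.sum_le_sum fun i _ => hpiece p inferInstance hgp i
        _ = δ * ∑ i ∈ Finset.range N, (p (B i)).toReal := by rw [Finset.mul_sum]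
        _ ≤ δ * (p Set.univ).toReal := by
            refine mul_le_mul_of_nonneg_left ?_ hδpos.le
            rw [hsplitm p inferInstance]
            have := ENNReal.toReal_nonneg (a := p T)
            linarith
    have hSn : |∑ i ∈ Finset.range N, ((∫ z in B i, g z ∂n) - (n (B i)).toReal * g (u i))|
        ≤ δ * (n Set.univ).toReal := by
      calc |∑ i ∈ Finset.range N, ((∫ z in B i, g z ∂n) - (n (B i)).toReal * g (u i))|
          ≤ ∑ i ∈ Finset.range N, |(∫ z in B i, g z ∂n) - (n (B i)).toReal * g (u i)| :=
            Finset.abs_sum_le_sum_abs _ _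
        _ ≤ ∑ i ∈ Finset.range N, δ * (n (B i)).toReal :=
            Finset.sum_le_sum fun i _ => hpiece n inferInstance hgn i
        _ = δ * ∑ i ∈ Finset.range N, (n (B i)).toReal := by rw [Finset.mul_sum]
        _ ≤ δ * (n Set.univ).toReal := by
            refine mul_le_mul_of_nonneg_left ?_ hδpos.le
            rw [hsplitm n inferInstance]
            have := ENNReal.toReal_nonneg (a := n T)
            linarith
    have htailp := htailq p hple hgp
    have htailn := htailq n hnle hgn
    have h1 : (∫⁻ z in T, H z ∂p) + (∫⁻ z in T, H z ∂n) = ∫⁻ z in T, H z ∂τ := by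
      rw [hτdef, totalVariation_def, Measure.restrict_add, lintegral_add_measure]
    have h2 : (∫⁻ z in T, H z ∂τ).toReal ≤ ε / 4 := by
      have h3 := ENNReal.toReal_mono ENNReal.ofReal_ne_top hTtail.le
      rwa [ENNReal.toReal_ofReal (by positivity)] at h3
    have hfinτ : (∫⁻ z in T, H z ∂τ) ≠ ⊤ := (lt_trans hTtail ENNReal.ofReal_lt_top).ne
    have hpf : (∫⁻ z in T, H z ∂p) ≠ ⊤ := by
      refine ne_top_of_le_ne_top hfinτ ?_
      rw [← h1]; exact le_self_add
    have hnf : (∫⁻ z in T, H z ∂n) ≠ ⊤ := by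
      refine ne_top_of_le_ne_top hfinτ ?_
      rw [← h1]; exact le_add_self
    have htailsum : (∫⁻ z in T, H z ∂p).toReal + (∫⁻ z in T, H z ∂n).toReal ≤ ε / 4 := by
      calc (∫⁻ z in T, H z ∂p).toReal + (∫⁻ z in T, H z ∂n).toReal
          = ((∫⁻ z in T, H z ∂p) + ∫⁻ z in T, H z ∂n).toReal :=
            (ENNReal.toReal_add hpf hnf).symm
        _ = (∫⁻ z in T, H z ∂τ).toReal := by rw [h1]
        _ ≤ ε / 4 := h2
    have hδtv : δ * (p Set.univ).toReal + δ * (n Set.univ).toReal ≤ ε / 2 := by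
      have htv2 : (p Set.univ).toReal + (n Set.univ).toReal = tv := by
        rw [htvdef, hτsplit, ENNReal.toReal_add (measure_ne_top _ _) (measure_ne_top _ _)]
      have h5 : δ * tv ≤ ε / 2 := by
        rw [hδdef, div_mul_eq_mul_div, div_le_div_iff₀ (by positivity) (by norm_num)]
        nlinarith
      calc δ * (p Set.univ).toReal + δ * (n Set.univ).toReal = δ * tv := by
            rw [← htv2]; ring
        _ ≤ ε / 2 := h5
    have habs : ∀ a b c d : ℝ, |a - b + (c - d)| ≤ |a| + |b| + (|c| + |d|) := by
      intro a b c d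
      calc |a - b + (c - d)| ≤ |a - b| + |c - d| := abs_add_le _ _
        _ ≤ |a| + |b| + (|c| + |d|) := add_le_add (abs_sub a b) (abs_sub c d)
    refine le_trans (le_abs_self _) ?_
    rw [key]
    refine le_trans (habs _ _ _ _) ?_
    refine le_trans (add_le_add (add_le_add hSp hSn) (add_le_add htailp htailn)) ?_
    linarith
  calc |(μ - ν) Set.univ| + sSup (Sset e (μ - ν)) ≤ ε / 4 + (ε / 2 + ε / 4) := add_le_add hmass hsup
    _ = ε := by ring

lemma kruNorm_nonneg {e : Z} {μ : SignedMeasure Z} (hμ : MemM1 e μ) : 0 ≤ kruNorm e μ := by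
  rw [kruNorm_eq]
  exact add_nonneg (abs_nonneg _) (sSup_Sset_nonneg hμ)


/-- `(KRu(Z))* ≅ Lip(Z)` isometrically, the pairing being integration against
measures in `M_1(Z)` (a bounded linear functional on a dense subspace determines uniquely a
bounded linear functional on the completion, so the dual of `KRu(Z)` is the space of linear
functionals on `M_1(Z)` that are bounded for the `KRu` norm).  Concretely:
(i) every Lipschitz function `f` induces via integration a `KRu`-bounded linear functional on
`M_1(Z)` whose operator norm is exactly `‖f‖_Lip = max {|f(e)|, L(f)}`; and
(ii) every `KRu`-bounded linear functional on `M_1(Z)` is given by integration against a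
unique Lipschitz function. -/
theorem kru_dual_eq_lip [LocallyCompactSpace Z] [CompleteSpace Z]
    [TopologicalSpace.SeparableSpace Z] (hgeo : IsGeodesic Z) (e : Z) :
    (∀ f : Z → ℝ, (∃ K : ℝ≥0, LipschitzWith K f) →
      (∀ μ : SignedMeasure Z, MemM1 e μ → |sInteg μ f| ≤ lipNorm e f * kruNorm e μ) ∧
      lipNorm e f =
        sInf {C : ℝ | 0 ≤ C ∧
          ∀ μ : SignedMeasure Z, MemM1 e μ → |sInteg μ f| ≤ C * kruNorm e μ})
    ∧
    (∀ Φ : SignedMeasure Z → ℝ,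
      (∀ μ ν : SignedMeasure Z, MemM1 e μ → MemM1 e ν → Φ (μ + ν) = Φ μ + Φ ν) →
      (∀ (c : ℝ) (μ : SignedMeasure Z), MemM1 e μ → Φ (c • μ) = c * Φ μ) →
      (∃ C : ℝ, ∀ μ : SignedMeasure Z, MemM1 e μ → |Φ μ| ≤ C * kruNorm e μ) →
      ∃! f : Z → ℝ, (∃ K : ℝ≥0, LipschitzWith K f) ∧
        ∀ μ : SignedMeasure Z, MemM1 e μ → Φ μ = sInteg μ f) := by
  constructor
  · intro f hf
    refine ⟨fun μ hμ => part_i_bound e hf hμ, ?_⟩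
    have hlipnn : 0 ≤ lipNorm e f := le_trans lipConst_nonneg (le_max_right _ _)
    have hmem : lipNorm e f ∈ {C : ℝ | 0 ≤ C ∧ ∀ μ : SignedMeasure Z, MemM1 e μ →
        |sInteg μ f| ≤ C * kruNorm e μ} := ⟨hlipnn, fun μ hμ => part_i_bound e hf hμ⟩
    obtain ⟨K, hK⟩ := hf
    refine le_antisymm (le_csInf ⟨_, hmem⟩ ?_) (csInf_le ⟨0, fun C hC => hC.1⟩ hmem)
    rintro C ⟨hC0, hC⟩
    have hfe : |f e| ≤ C := by
      have h := hC (diracSM e) (memM1_diracSM e e)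
      rw [sInteg_diracSM hK e] at h
      calc |f e| ≤ C * kruNorm e (diracSM e) := h
        _ ≤ C * 1 := mul_le_mul_of_nonneg_left (kruNorm_diracSM_base e) hC0
        _ = C := mul_one C
    have hL : lipConst f ≤ C := by
      refine lipConst_le hC0 fun x y => ?_
      have h := hC (diracSM x - diracSM y) (memM1_sub (memM1_diracSM e x) (memM1_diracSM e y))
      rw [sInteg_sub e (memM1_diracSM e x) (memM1_diracSM e y) hK,
        sInteg_diracSM hK x, sInteg_diracSM hK y] at h
      calc |f x - f y| ≤ C * kruNorm e (diracSM x - diracSM y) := h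
        _ ≤ C * dist x y := mul_le_mul_of_nonneg_left (kruNorm_dirac_sub_le e x y) hC0
    exact max_le hfe hL
  · intro Φ hadd hsmul hbdd
    obtain ⟨C₀, hC₀⟩ := hbdd
    set C := max C₀ 0 with hCdef
    have hC0 : 0 ≤ C := le_max_right _ _
    have hC : ∀ μ : SignedMeasure Z, MemM1 e μ → |Φ μ| ≤ C * kruNorm e μ := by
      intro μ hμ
      have h1 := hC₀ μ hμ
      have h2 : 0 ≤ kruNorm e μ := kruNorm_nonneg hμ
      nlinarith [le_max_left C₀ (0 : ℝ)]
    set f := fun x => Φ (diracSM x) with hfdef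
    have hΦdiff : ∀ x y : Z, f x - f y = Φ (diracSM x - diracSM y) := by
      intro x y
      have h1 := hadd (diracSM x - diracSM y) (diracSM y)
        (memM1_sub (memM1_diracSM e x) (memM1_diracSM e y)) (memM1_diracSM e y)
      rw [sub_add_cancel] at h1
      simp only [hfdef]
      linarith
    have hflip : LipschitzWith C.toNNReal f := by
      refine LipschitzWith.of_dist_le_mul fun x y => ?_
      rw [Real.dist_eq, hΦdiff x y, Real.coe_toNNReal C hC0]
      calc |Φ (diracSM x - diracSM y)|
          ≤ C * kruNorm e (diracSM x - diracSM y) :=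
            hC _ (memM1_sub (memM1_diracSM e x) (memM1_diracSM e y))
        _ ≤ C * dist x y := mul_le_mul_of_nonneg_left (kruNorm_dirac_sub_le e x y) hC0
    have hΦzero : Φ 0 = 0 := by
      have h1 := hsmul 0 0 (memM1_zero e)
      rwa [zero_smul, zero_mul] at h1
    have hrep : ∀ μ : SignedMeasure Z, MemM1 e μ → Φ μ = sInteg μ f := by
      intro μ hμ
      by_contra hne
      have habs : 0 < |Φ μ - sInteg μ f| := abs_pos.2 (sub_ne_zero.2 hne)
      set ε0 := |Φ μ - sInteg μ f| with hε0
      have hlipnn : 0 ≤ lipNorm e f := le_trans lipConst_nonneg (le_max_right _ _)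
      set D := C + lipNorm e f + 1 with hDdef
      have hDpos : 0 < D := by linarith
      obtain ⟨N, u, c, hkru⟩ := discrete_approx e hμ (show 0 < ε0 / (2 * D) by positivity)
      set ν := ∑ i ∈ Finset.range N, c i • diracSM (u i) with hνdef
      have hνM1 : MemM1 e ν := memM1_finsum _ _ fun i _ => memM1_smul _ (memM1_diracSM e _)
      have hΦsum : ∀ s : Finset ℕ,
          Φ (∑ i ∈ s, c i • diracSM (u i)) = ∑ i ∈ s, c i * Φ (diracSM (u i)) := by
        intro s
        induction s using Finset.induction_on with
        | empty => simpa using hΦzero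
        | insert _ _ hx ih =>
            rw [Finset.sum_insert hx, Finset.sum_insert hx,
              hadd _ _ (memM1_smul _ (memM1_diracSM e _))
                (memM1_finsum _ _ fun i _ => memM1_smul _ (memM1_diracSM e _)),
              hsmul _ _ (memM1_diracSM e _), ih]
      have hνint : sInteg ν f = ∑ i ∈ Finset.range N, c i * f (u i) := by
        rw [hνdef, sInteg_finsum _ _ (fun i _ => memM1_smul _ (memM1_diracSM e _)) hflip]
        refine Finset.sum_congr rfl fun i _ => ?_
        rw [sInteg_smul e _ (memM1_diracSM e _) hflip, sInteg_diracSM hflip (u i)]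
      have hΦν : Φ ν = sInteg ν f := by
        rw [hνint, hνdef, hΦsum]
      have hμν : MemM1 e (μ - ν) := memM1_sub hμ hνM1
      have h1 : Φ μ - Φ ν = Φ (μ - ν) := by
        have h2 := hadd (μ - ν) ν hμν hνM1
        rw [sub_add_cancel] at h2
        linarith
      have h3 : sInteg μ f - sInteg ν f = sInteg (μ - ν) f :=
        (sInteg_sub e hμ hνM1 hflip).symm
      have h4 : |Φ (μ - ν)| ≤ C * kruNorm e (μ - ν) := hC _ hμν
      have h5 : |sInteg (μ - ν) f| ≤ lipNorm e f * kruNorm e (μ - ν) :=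
        part_i_bound e ⟨C.toNNReal, hflip⟩ hμν
      have h6 : 0 ≤ kruNorm e (μ - ν) := kruNorm_nonneg hμν
      have heq : Φ μ - sInteg μ f = Φ (μ - ν) - sInteg (μ - ν) f := by
        rw [← h1, ← h3]
        linarith
      have h7 : ε0 ≤ (C + lipNorm e f) * kruNorm e (μ - ν) := by
        calc ε0 = |Φ (μ - ν) - sInteg (μ - ν) f| := by rw [hε0, heq]
          _ ≤ |Φ (μ - ν)| + |sInteg (μ - ν) f| := abs_sub _ _
          _ ≤ C * kruNorm e (μ - ν) + lipNorm e f * kruNorm e (μ - ν) := add_le_add h4 h5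
          _ = (C + lipNorm e f) * kruNorm e (μ - ν) := by ring
      have h8 : (C + lipNorm e f) * kruNorm e (μ - ν) ≤ (C + lipNorm e f) * (ε0 / (2 * D)) :=
        mul_le_mul_of_nonneg_left hkru (by linarith)
      have h9 : (C + lipNorm e f) * (ε0 / (2 * D)) < ε0 := by
        have hrw : (C + lipNorm e f) * (ε0 / (2 * D)) = ((C + lipNorm e f) * ε0) / (2 * D) := by
          ring
        rw [hrw, hDdef, div_lt_iff₀ (by linarith : (0:ℝ) < 2 * (C + lipNorm e f + 1))]
        nlinarith
      linarith
    refine ⟨f, ⟨⟨C.toNNReal, hflip⟩, hrep⟩, ?_⟩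
    rintro f₁ ⟨⟨K₁, hK₁⟩, hrep₁⟩
    funext x
    have h1 := hrep₁ (diracSM x) (memM1_diracSM e x)
    rw [sInteg_diracSM hK₁ x] at h1
    exact h1.symm
end
end

section
/- Let Z be a compact metric space. Then the set B = {μ ∈ M(Z) : ‖μ‖_TV ≤ 1} is compact with respect to the Kantorovich–Rubinstein norm ‖·‖_KRu, i.e. every sequence in B has a subsequence converging in ‖·‖_KRu to an element of B. -/
open MeasureTheory Filter Topology
open scoped ENNReal NNReal

noncomputable section
attribute [local instance] Classical.propDecidable

variable {Z : Type*} [MetricSpace Z] [MeasurableSpace Z] [BorelSpace Z]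

set_option linter.unusedSectionVars false

namespace KRUaux


/-- radius at level `m` -/
def rad (m : ℕ) : ℝ := (1/2 : ℝ) ^ m

lemma rad_pos (m : ℕ) : 0 < rad m := pow_pos (by norm_num) m

lemma rad_tendsto : Tendsto rad atTop (𝓝 0) :=
  tendsto_pow_atTop_nhds_zero_of_lt_one (by norm_num) (by norm_num)

/-- Index of a chosen cover point near `z` at level `m`. -/
def idx (c : ℕ → ℕ → Z) (K : ℕ → ℕ) (m : ℕ) (z : Z) : ℕ :=
  sInf {j | j < K m ∧ dist z (c m j) < rad m}

/-- Hierarchical partition code of `z` up to level `m`. -/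
def Qmap (c : ℕ → ℕ → Z) (K : ℕ → ℕ) : ℕ → Z → List ℕ
  | 0, _ => []
  | (m+1), z => idx c K m z :: Qmap c K m z

/-- The cell with code `l`. -/
def cellOf (c : ℕ → ℕ → Z) (K : ℕ → ℕ) (l : List ℕ) : Set Z :=
  {z | Qmap c K l.length z = l}

variable {c : ℕ → ℕ → Z} {K : ℕ → ℕ}

lemma idx_spec (hcov : ∀ m (z : Z), ∃ j, j < K m ∧ dist z (c m j) < rad m) (m : ℕ) (z : Z) :
    idx c K m z < K m ∧ dist z (c m (idx c K m z)) < rad m :=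
  Nat.sInf_mem (hcov m z)

lemma length_Qmap (m : ℕ) (z : Z) : (Qmap c K m z).length = m := by
  induction m with
  | zero => rfl
  | succ m ih => simp [Qmap, ih]

lemma cellOf_nil : cellOf c K ([] : List ℕ) = Set.univ := by
  ext z; simp [cellOf, Qmap]

lemma mem_cellOf_self (m : ℕ) (z : Z) : z ∈ cellOf c K (Qmap c K m z) := by
  show Qmap c K (Qmap c K m z).length z = Qmap c K m z
  rw [length_Qmap]

lemma cellOf_cons_eq (j : ℕ) (l : List ℕ) :
    cellOf c K (j :: l) = cellOf c K l ∩ {z | idx c K l.length z = j} := by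
  ext z
  simp only [cellOf, List.length_cons, Qmap, Set.mem_setOf_eq, Set.mem_inter_iff,
    List.cons.injEq]
  tauto

lemma cellOf_cons_subset (j : ℕ) (l : List ℕ) : cellOf c K (j :: l) ⊆ cellOf c K l := by
  rw [cellOf_cons_eq]; exact Set.inter_subset_left

/-- Generic measurability of fibers of `Nat.sInf` selections. -/
lemma measurableSet_sInf_fiber {α : Type*} [MeasurableSpace α] (S : ℕ → Set α)
    (hS : ∀ j, MeasurableSet (S j)) (j : ℕ) :
    MeasurableSet {a | sInf {i | a ∈ S i} = j} := by
  have hset : {a | sInf {i | a ∈ S i} = j} =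
      (S j ∩ ⋂ i ∈ Finset.range j, (S i)ᶜ) ∪ (if j = 0 then ⋂ i, (S i)ᶜ else ∅) := by
    ext a
    constructor
    · intro h
      by_cases hne : {i | a ∈ S i}.Nonempty
      · left
        refine ⟨h ▸ Nat.sInf_mem hne, ?_⟩
        simp only [Finset.mem_range, Set.mem_iInter, Set.mem_compl_iff]
        intro i hi
        exact Nat.notMem_of_lt_sInf (h ▸ hi)
      · right
        have he : {i | a ∈ S i} = ∅ := Set.not_nonempty_iff_eq_empty.mp hne
        have hj : j = 0 := by rw [← h, he, Nat.sInf_empty]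
        simp only [hj, if_pos, Set.mem_iInter, Set.mem_compl_iff]
        intro i
        intro hai
        exact absurd (Set.nonempty_of_mem (show i ∈ {i | a ∈ S i} from hai)) hne
    · rintro (⟨hj, hlt⟩ | h)
      · refine le_antisymm (Nat.sInf_le hj) ?_
        by_contra hcon
        push_neg at hcon
        have hmem := Nat.sInf_mem (Set.nonempty_of_mem (show j ∈ {i | a ∈ S i} from hj))
        simp only [Finset.mem_range, Set.mem_iInter, Set.mem_compl_iff] at hlt
        exact hlt _ hcon hmem
      · by_cases hj : j = 0
        · simp only [hj, if_pos] at h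
          simp only [Set.mem_iInter, Set.mem_compl_iff] at h
          have he : {i | a ∈ S i} = ∅ := by
            ext i; simp [h i]
          show sInf {i | a ∈ S i} = j
          rw [he, hj, Nat.sInf_empty]
        · simp [hj] at h
  rw [hset]
  refine MeasurableSet.union ?_ ?_
  · exact (hS j).inter (MeasurableSet.biInter (Finset.range j).countable_toSet
      fun i _ => (hS i).compl)
  · split
    · exact MeasurableSet.iInter fun i => (hS i).compl
    · exact MeasurableSet.empty

lemma measurableSet_idx_fiber (m j : ℕ) : MeasurableSet {z : Z | idx c K m z = j} := by
  have : {z : Z | idx c K m z = j} =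
      {a : Z | sInf {i | a ∈ (fun i => if i < K m then Metric.ball (c m i) (rad m) else ∅) i}
        = j} := by
    ext z
    have : {i | z ∈ (fun i => if i < K m then Metric.ball (c m i) (rad m) else ∅) i} =
        {i | i < K m ∧ dist z (c m i) < rad m} := by
      ext i
      by_cases hi : i < K m <;> simp [hi, Metric.mem_ball]
    simp only [Set.mem_setOf_eq, idx, this]
  rw [this]
  refine measurableSet_sInf_fiber _ (fun i => ?_) j
  split
  · exact measurableSet_ball
  · exact MeasurableSet.empty

lemma measurableSet_cellOf (l : List ℕ) : MeasurableSet (cellOf c K l) := by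
  induction l with
  | nil => rw [cellOf_nil]; exact MeasurableSet.univ
  | cons j l ih =>
    rw [cellOf_cons_eq]
    exact ih.inter (measurableSet_idx_fiber _ _)

lemma cell_partition (hcov : ∀ m (z : Z), ∃ j, j < K m ∧ dist z (c m j) < rad m)
    (l : List ℕ) :
    cellOf c K l = ⋃ j ∈ Finset.range (K l.length), cellOf c K (j :: l) := by
  ext z
  constructor
  · intro hz
    have h1 := (idx_spec hcov l.length z).1
    refine Set.mem_iUnion₂.2 ⟨idx c K l.length z, Finset.mem_range.2 h1, ?_⟩
    rw [cellOf_cons_eq]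
    exact ⟨hz, rfl⟩
  · intro hz
    rcases Set.mem_iUnion₂.1 hz with ⟨j, _, hj⟩
    exact cellOf_cons_subset j l hj

lemma cell_disjoint_heads {j j' : ℕ} {l : List ℕ} (h : j ≠ j') :
    Disjoint (cellOf c K (j :: l)) (cellOf c K (j' :: l)) := by
  rw [Set.disjoint_left]
  intro z hz hz'
  rw [cellOf_cons_eq] at hz hz'
  exact h (hz.2.symm ▸ hz'.2.symm ▸ rfl)

lemma cell_disjoint_of_length {l l' : List ℕ} (hlen : l.length = l'.length) (h : l ≠ l') :
    Disjoint (cellOf c K l) (cellOf c K l') := by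
  rw [Set.disjoint_left]
  intro z hz hz'
  apply h
  have h1 : Qmap c K l.length z = l := hz
  have h2 : Qmap c K l'.length z = l' := hz'
  rw [← h1, ← h2, hlen]

lemma dist_le_in_cell (hcov : ∀ m (z : Z), ∃ j, j < K m ∧ dist z (c m j) < rad m)
    {j : ℕ} {l : List ℕ} {z z' : Z}
    (hz : z ∈ cellOf c K (j :: l)) (hz' : z' ∈ cellOf c K (j :: l)) :
    dist z z' ≤ 2 * rad l.length := by
  rw [cellOf_cons_eq] at hz hz'
  have h1 := (idx_spec hcov l.length z).2
  have h2 := (idx_spec hcov l.length z').2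
  rw [hz.2] at h1
  rw [hz'.2] at h2
  calc dist z z' ≤ dist z (c l.length j) + dist z' (c l.length j) := dist_triangle_right _ _ _
    _ ≤ 2 * rad l.length := by linarith

lemma finite_range_Qmap (hcov : ∀ m (z : Z), ∃ j, j < K m ∧ dist z (c m j) < rad m)
    (m : ℕ) : (Set.range (Qmap c K m)).Finite := by
  induction m with
  | zero =>
    refine Set.Finite.subset (Set.finite_singleton ([] : List ℕ)) ?_
    rintro l ⟨z, rfl⟩; rfl
  | succ m ih =>
    refine Set.Finite.subset (Set.Finite.image2 List.cons (Set.finite_Iio (K m)) ih) ?_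
    rintro l ⟨z, rfl⟩
    exact Set.mem_image2_of_mem (idx_spec hcov m z).1 ⟨z, rfl⟩


/-- Left endpoint of the interval attached to cell code `l`. -/
def Afun (w : List ℕ → ℝ) : List ℕ → ℝ
  | [] => 0
  | (j :: l) => Afun w l + ∑ j' ∈ Finset.range j, w (j' :: l)

/-- The cell code of level `m` whose interval contains `t`. -/
def branch (w : List ℕ → ℝ) : ℕ → ℝ → List ℕ
  | 0, _ => []
  | (m+1), t =>
    (sInf {i | t < Afun w (branch w m t) +
      ∑ j' ∈ Finset.range (i+1), w (j' :: branch w m t)}) :: branch w m t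

variable {w : List ℕ → ℝ} {K : ℕ → ℕ}

lemma branch_length (m : ℕ) (t : ℝ) : (branch w m t).length = m := by
  induction m with
  | zero => rfl
  | succ m ih => simp [branch, ih]

section Spec

variable (hnn : ∀ l, 0 ≤ w l)
  (hadd : ∀ l : List ℕ, w l = ∑ j ∈ Finset.range (K l.length), w (j :: l))
  (hKpos : ∀ m, 0 < K m)
  (hKw : ∀ (l : List ℕ) (j : ℕ), K l.length ≤ j → w (j :: l) = 0)

include hnn hadd hKpos in
lemma branch_spec : ∀ (m : ℕ) (t : ℝ), 0 ≤ t → t < w [] →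
    Afun w (branch w m t) ≤ t ∧ t < Afun w (branch w m t) + w (branch w m t) := by
  intro m
  induction m with
  | zero => intro t h0 h1; exact ⟨h0, by simpa [Afun, branch] using h1⟩
  | succ m ih =>
    intro t h0 h1
    obtain ⟨hA, hAw⟩ := ih t h0 h1
    set l := branch w m t with hl
    set S : ℕ → ℝ := fun i => ∑ j' ∈ Finset.range i, w (j' :: l) with hS
    have hSK : S (K l.length) = w l := (hadd l).symm
    have hTne : {i | t < Afun w l + S (i+1)}.Nonempty := by
      refine ⟨K l.length - 1, ?_⟩
      have : K l.length - 1 + 1 = K l.length := Nat.succ_pred_eq_of_pos (hKpos _)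
      simp only [Set.mem_setOf_eq, this, hSK]
      exact hAw
    set j₀ := sInf {i | t < Afun w l + S (i+1)} with hj₀
    have hmem : t < Afun w l + S (j₀ + 1) := Nat.sInf_mem hTne
    have hbr : branch w (m+1) t = j₀ :: l := by
      simp only [branch, ← hl]; rfl
    have hAcons : Afun w (j₀ :: l) = Afun w l + S j₀ := rfl
    have hSsucc : S (j₀ + 1) = S j₀ + w (j₀ :: l) := Finset.sum_range_succ _ _
    constructor
    · rw [hbr, hAcons]
      rcases Nat.eq_zero_or_pos j₀ with h | h
      · have hz : S j₀ = 0 := by simp [h, hS]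
        rw [hz]; linarith
      · have hnotmem : (j₀ - 1) ∉ {i | t < Afun w l + S (i+1)} :=
          Nat.notMem_of_lt_sInf (by rw [← hj₀]; omega)
        simp only [Set.mem_setOf_eq] at hnotmem
        have : j₀ - 1 + 1 = j₀ := Nat.succ_pred_eq_of_pos h
        rw [this] at hnotmem
        linarith [not_lt.1 hnotmem]
    · rw [hbr, hAcons]
      rw [hSsucc] at hmem
      linarith

include hnn hadd hKw in
lemma branch_unique : ∀ (l : List ℕ) (t : ℝ), Afun w l ≤ t → t < Afun w l + w l →
    0 ≤ t ∧ t < w [] ∧ branch w l.length t = l := by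
  intro l
  induction l with
  | nil => intro t h0 h1; exact ⟨h0, by simpa [Afun] using h1, rfl⟩
  | cons j l ih =>
    intro t h0 h1
    set S : ℕ → ℝ := fun i => ∑ j' ∈ Finset.range i, w (j' :: l) with hS
    have hAcons : Afun w (j :: l) = Afun w l + S j := rfl
    have hSsucc : S (j + 1) = S j + w (j :: l) := Finset.sum_range_succ _ _
    by_cases hjK : K l.length ≤ j
    · exfalso
      rw [hKw l j hjK, add_zero] at h1
      exact absurd (lt_of_le_of_lt h0 h1) (lt_irrefl _)
    push_neg at hjK
    have hSmono : ∀ i i', i ≤ i' → S i ≤ S i' := fun i i' hii =>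
      Finset.sum_le_sum_of_subset_of_nonneg
        (Finset.range_subset_range.2 hii) (fun _ _ _ => hnn _)
    have hSK : S (K l.length) = w l := (hadd l).symm
    have hAl : Afun w l ≤ t := by
      have : 0 ≤ S j := by
        simpa [hS] using Finset.sum_nonneg (fun i _ => hnn (i :: l))
      linarith
    rw [hAcons] at h0 h1
    have hAlw : t < Afun w l + w l := by
      have h2 : S (j+1) ≤ S (K l.length) := hSmono _ _ hjK
      rw [hSsucc] at h2
      rw [← hSK]
      linarith
    obtain ⟨ht0, htM, hbr⟩ := ih t hAl hAlw
    refine ⟨ht0, htM, ?_⟩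
    show (sInf {i | t < Afun w (branch w l.length t) +
        ∑ j' ∈ Finset.range (i+1), w (j' :: branch w l.length t)}) :: branch w l.length t
        = j :: l
    rw [hbr]
    have hTset : {i | t < Afun w l + ∑ j' ∈ Finset.range (i+1), w (j' :: l)} =
        {i | t < Afun w l + S (i+1)} := rfl
    rw [hTset]
    congr 1
    have hjmem : j ∈ {i | t < Afun w l + S (i+1)} := by
      simp only [Set.mem_setOf_eq, hSsucc]
      linarith
    refine le_antisymm (Nat.sInf_le hjmem) ?_
    by_contra hcon
    push_neg at hcon
    have hmem := Nat.sInf_mem ⟨j, hjmem⟩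
    simp only [Set.mem_setOf_eq] at hmem
    have : S (sInf {i | t < Afun w l + S (i+1)} + 1) ≤ S j := hSmono _ _ (by omega)
    linarith

end Spec

lemma measurableSet_branch_fiber (w : List ℕ → ℝ) (m : ℕ) (l : List ℕ) :
    MeasurableSet {t : ℝ | branch w m t = l} := by
  induction m generalizing l with
  | zero =>
    cases l with
    | nil => simpa [branch] using MeasurableSet.univ
    | cons j l => simp [branch]
  | succ m ih =>
    cases l with
    | nil =>
      have : {t : ℝ | branch w (m+1) t = []} = ∅ := by
        ext t; simp [branch]
      rw [this]; exact MeasurableSet.empty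
    | cons j l =>
      have hset : {t : ℝ | branch w (m+1) t = j :: l} =
          {t : ℝ | branch w m t = l} ∩
          {t : ℝ | sInf {i | t ∈ Set.Iio (Afun w l + ∑ j' ∈ Finset.range (i+1), w (j' :: l))}
            = j} := by
        ext t
        simp only [Set.mem_setOf_eq, Set.mem_inter_iff, branch, List.cons.injEq, Set.mem_Iio]
        constructor
        · rintro ⟨h1, h2⟩
          exact ⟨h2, by rw [← h2]; exact h1⟩
        · rintro ⟨h1, h2⟩
          exact ⟨by rw [h1]; exact h2, h1⟩
      rw [hset]
      refine (ih l).inter ?_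
      exact measurableSet_sInf_fiber
        (fun i => Set.Iio (Afun w l + ∑ j' ∈ Finset.range (i+1), w (j' :: l)))
        (fun i => measurableSet_Iio) j


/-- Representative point of a cell. -/
def repPt (c : ℕ → ℕ → Z) (K : ℕ → ℕ) (e : Z) (l : List ℕ) : Z :=
  if h : (cellOf c K l).Nonempty then h.some else e

lemma repPt_mem {e : Z} {l : List ℕ} (h : (cellOf c K l).Nonempty) :
    repPt c K e l ∈ cellOf c K l := by
  rw [repPt, dif_pos h]; exact h.some_mem

/-- The level-`m` discretized parametrization. -/
def GmF (c : ℕ → ℕ → Z) (K : ℕ → ℕ) (e : Z) (w : List ℕ → ℝ) (m : ℕ) (t : ℝ) : Z :=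
  repPt c K e (branch w m t)

/-- The limit parametrization of the limit measure. -/
def GF (c : ℕ → ℕ → Z) (K : ℕ → ℕ) (e : Z) (w : List ℕ → ℝ) (t : ℝ) : Z :=
  letI : Nonempty Z := ⟨e⟩
  limUnder atTop (fun m => GmF c K e w m t)

lemma measurable_GmF {e : Z} {w : List ℕ → ℝ} (m : ℕ) : Measurable (GmF c K e w m) := by
  intro B hB
  have hpre : GmF c K e w m ⁻¹' B =
      ⋃ (l : List ℕ) (_ : repPt c K e l ∈ B), {t | branch w m t = l} := by
    ext t
    simp only [Set.mem_preimage, Set.mem_iUnion, Set.mem_setOf_eq]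
    constructor
    · intro h; exact ⟨branch w m t, h, rfl⟩
    · rintro ⟨l, hl, ht⟩; rw [GmF, ht]; exact hl
  rw [hpre]
  exact MeasurableSet.iUnion fun l => MeasurableSet.iUnion fun _ =>
    measurableSet_branch_fiber w m l

lemma integrable_of_continuous [CompactSpace Z] (f : Z → ℝ) (hf : Continuous f)
    (m : Measure Z) [IsFiniteMeasure m] : Integrable f m := by
  obtain ⟨C, hC⟩ := isCompact_univ.exists_bound_of_continuousOn hf.continuousOn
  exact ⟨hf.aestronglyMeasurable,
    HasFiniteIntegral.of_bounded (ae_of_all _ fun x => hC x trivial)⟩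

lemma core_construction [CompactSpace Z] (e : Z) (c : ℕ → ℕ → Z) (K : ℕ → ℕ)
    (hcov : ∀ m (z : Z), ∃ j, j < K m ∧ dist z (c m j) < rad m)
    (ν : ℕ → Measure Z) (hfin : ∀ n, IsFiniteMeasure (ν n))
    (hmass : ∀ n, ν n Set.univ ≤ 1) (w : List ℕ → ℝ)
    (hw : ∀ l, Tendsto (fun n => (ν n (cellOf c K l)).toReal) atTop (𝓝 (w l))) :
    ∃ κ : Measure Z, IsFiniteMeasure κ ∧ κ Set.univ = ENNReal.ofReal (w []) ∧
      ∀ ε : ℝ, 0 < ε → ∀ᶠ n in atTop, ∀ f : Z → ℝ, f e = 0 → LipschitzWith 1 f →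
        |(∫ z, f z ∂(ν n)) - ∫ z, f z ∂κ| ≤ ε := by
  have hKpos : ∀ m, 0 < K m := by
    intro m; obtain ⟨j, hj, _⟩ := hcov m e; omega
  have hnn : ∀ l, 0 ≤ w l := fun l =>
    ge_of_tendsto (hw l) (Eventually.of_forall fun n => ENNReal.toReal_nonneg)
  have hmassR : ∀ n (s : Set Z), (ν n s).toReal ≤ 1 := by
    intro n s
    haveI := hfin n
    calc (ν n s).toReal ≤ (ν n Set.univ).toReal :=
          ENNReal.toReal_mono (measure_ne_top _ _) (measure_mono (Set.subset_univ _))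
      _ ≤ 1 := by
          have := ENNReal.toReal_mono ENNReal.one_ne_top (hmass n)
          simpa using this
  have hwle1 : ∀ l, w l ≤ 1 := fun l =>
    le_of_tendsto (hw l) (Eventually.of_forall fun n => hmassR n _)
  have hempty : ∀ l, cellOf c K l = ∅ → w l = 0 := by
    intro l h
    refine tendsto_nhds_unique (hw l) ?_
    have : (fun n => (ν n (cellOf c K l)).toReal) = fun _ => (0:ℝ) := by
      funext n; rw [h]; simp
    rw [this]; exact tendsto_const_nhds
  have hpos : ∀ l, 0 < w l → (cellOf c K l).Nonempty := by
    intro l hl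
    rcases Set.eq_empty_or_nonempty (cellOf c K l) with h | h
    · exact absurd (hempty l h) (by linarith)
    · exact h
  have hKw : ∀ (l : List ℕ) (j : ℕ), K l.length ≤ j → w (j :: l) = 0 := by
    intro l j hj
    refine hempty _ ?_
    rw [Set.eq_empty_iff_forall_notMem]
    intro z hz
    rw [cellOf_cons_eq] at hz
    have := (idx_spec hcov l.length z).1
    rw [hz.2] at this
    omega
  have hadd : ∀ l : List ℕ, w l = ∑ j ∈ Finset.range (K l.length), w (j :: l) := by
    intro l
    have hdisj : (↑(Finset.range (K l.length)) : Set ℕ).PairwiseDisjoint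
        (fun j => cellOf c K (j :: l)) := fun j _ j' _ hne => cell_disjoint_heads hne
    have per : ∀ n, (ν n (cellOf c K l)).toReal
        = ∑ j ∈ Finset.range (K l.length), (ν n (cellOf c K (j :: l))).toReal := by
      intro n
      haveI := hfin n
      rw [cell_partition hcov l, measure_biUnion_finset hdisj
        (fun j _ => measurableSet_cellOf _)]
      exact ENNReal.toReal_sum fun j _ => measure_ne_top _ _
    exact tendsto_nhds_unique (hw l)
      (Tendsto.congr (fun n => (per n).symm)
        (tendsto_finset_sum _ fun j _ => hw (j :: l)))
  set M := w [] with hMdef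
  have hM0 : 0 ≤ M := hnn []
  have hM1 : M ≤ 1 := hwle1 []
  set ρ : Measure ℝ := volume.restrict (Set.Ico 0 M) with hρdef
  haveI : IsFiniteMeasure ρ := by
    constructor
    rw [hρdef, Measure.restrict_apply MeasurableSet.univ, Set.univ_inter, Real.volume_Ico]
    exact ENNReal.ofReal_lt_top
  have hρuniv : (ρ Set.univ).toReal = M := by
    rw [hρdef, Measure.restrict_apply MeasurableSet.univ, Set.univ_inter, Real.volume_Ico,
      sub_zero, ENNReal.toReal_ofReal hM0]
  have hbrs := branch_spec (w := w) (K := K) hnn hadd hKpos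
  have hbru := branch_unique (w := w) (K := K) hnn hadd hKw
  have hwpos : ∀ (m : ℕ) (t : ℝ), 0 ≤ t → t < M → 0 < w (branch w m t) := by
    intro m t h0 h1
    have := hbrs m t h0 h1
    linarith [this.1, this.2]
  have hbne : ∀ (m : ℕ) (t : ℝ), 0 ≤ t → t < M → (cellOf c K (branch w m t)).Nonempty :=
    fun m t h0 h1 => hpos _ (hwpos m t h0 h1)
  have hGm_mem : ∀ (m : ℕ) (t : ℝ), 0 ≤ t → t < M →
      GmF c K e w m t ∈ cellOf c K (branch w m t) :=
    fun m t h0 h1 => repPt_mem (hbne m t h0 h1)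
  have hbcons : ∀ (m : ℕ) (t : ℝ), ∃ j, branch w (m+1) t = j :: branch w m t :=
    fun m t => ⟨_, rfl⟩
  have hchain : ∀ (m m' : ℕ), m ≤ m' → ∀ t : ℝ,
      cellOf c K (branch w m' t) ⊆ cellOf c K (branch w m t) := by
    intro m m' hmm'
    induction m' with
    | zero => intro t; have : m = 0 := Nat.le_zero.1 hmm'; rw [this]
    | succ m' ih =>
      intro t
      rcases Nat.lt_or_ge m (m'+1) with h | h
      · obtain ⟨j, hj⟩ := hbcons m' t
        rw [hj]
        exact (cellOf_cons_subset j _).trans (ih (by omega) t)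
      · have : m = m' + 1 := le_antisymm hmm' h
        rw [this]
  have hdistGm : ∀ (t : ℝ), 0 ≤ t → t < M → ∀ (m n' : ℕ), m + 1 ≤ n' →
      dist (GmF c K e w (m+1) t) (GmF c K e w n' t) ≤ 2 * rad m := by
    intro t h0 h1 m n' hn'
    have h2 : GmF c K e w (m+1) t ∈ cellOf c K (branch w (m+1) t) := hGm_mem _ t h0 h1
    have h3 : GmF c K e w n' t ∈ cellOf c K (branch w (m+1) t) :=
      hchain (m+1) n' hn' t (hGm_mem n' t h0 h1)
    obtain ⟨j, hj⟩ := hbcons m t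
    rw [hj] at h2 h3
    have := dist_le_in_cell hcov h2 h3
    rwa [branch_length] at this
  set D₀ := Metric.diam (Set.univ : Set Z) with hD₀
  have hbdd : Bornology.IsBounded (Set.univ : Set Z) := isCompact_univ.isBounded
  have hD₀0 : 0 ≤ D₀ := Metric.diam_nonneg
  have hcauchy : ∀ t : ℝ, 0 ≤ t → t < M → CauchySeq (fun m => GmF c K e w m t) := by
    intro t h0 h1
    apply cauchySeq_of_le_tendsto_0 (b := fun N => if N = 0 then D₀ else 2 * rad (N-1))
    · intro n m N hn hm
      by_cases hN : N = 0
      · rw [if_pos hN]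
        exact Metric.dist_le_diam_of_mem hbdd trivial trivial
      · rw [if_neg hN]
        obtain ⟨N', rfl⟩ : ∃ N', N = N' + 1 := ⟨N - 1, by omega⟩
        simp only [Nat.add_sub_cancel]
        have h2 : GmF c K e w n t ∈ cellOf c K (branch w (N'+1) t) :=
          hchain (N'+1) n hn t (hGm_mem n t h0 h1)
        have h3 : GmF c K e w m t ∈ cellOf c K (branch w (N'+1) t) :=
          hchain (N'+1) m hm t (hGm_mem m t h0 h1)
        obtain ⟨j, hj⟩ := hbcons N' t
        rw [hj] at h2 h3
        have := dist_le_in_cell hcov h2 h3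
        rwa [branch_length] at this
    · have h2 : Tendsto (fun N : ℕ => 2 * rad (N-1)) atTop (𝓝 0) := by
        have := (rad_tendsto.comp (tendsto_sub_atTop_nat 1)).const_mul (2:ℝ)
        simpa using this
      refine h2.congr' ?_
      filter_upwards [eventually_ge_atTop 1] with N hN
      rw [if_neg (by omega)]
  have hGtend : ∀ t : ℝ, 0 ≤ t → t < M →
      Tendsto (fun m => GmF c K e w m t) atTop (𝓝 (GF c K e w t)) := by
    intro t h0 h1
    haveI : Nonempty Z := ⟨e⟩
    exact (hcauchy t h0 h1).tendsto_limUnder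
  have hGdist : ∀ t : ℝ, 0 ≤ t → t < M → ∀ m : ℕ,
      dist (GF c K e w t) (GmF c K e w (m+1) t) ≤ 2 * rad m := by
    intro t h0 h1 m
    refine le_of_tendsto ((hGtend t h0 h1).dist tendsto_const_nhds) ?_
    filter_upwards [eventually_ge_atTop (m+1)] with n' hn'
    rw [dist_comm]
    exact hdistGm t h0 h1 m n' hn'
  have hGaem : AEMeasurable (GF c K e w) ρ := by
    refine aemeasurable_of_tendsto_metrizable_ae (f := fun m => GmF c K e w m)
      (g := GF c K e w) atTop (fun m => (measurable_GmF m).aemeasurable) ?_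
    rw [hρdef]
    rw [ae_restrict_iff' measurableSet_Ico]
    exact ae_of_all _ fun t ht => hGtend t ht.1 ht.2
  refine ⟨Measure.map (GF c K e w) ρ, ?_, ?_, ?_⟩
  case refine_2 =>
    rw [Measure.map_apply_of_aemeasurable hGaem MeasurableSet.univ, Set.preimage_univ,
      hρdef, Measure.restrict_apply MeasurableSet.univ, Set.univ_inter, Real.volume_Ico,
      sub_zero]
  case refine_1 =>
    constructor
    rw [Measure.map_apply_of_aemeasurable hGaem MeasurableSet.univ, Set.preimage_univ,
      hρdef, Measure.restrict_apply MeasurableSet.univ, Set.univ_inter, Real.volume_Ico]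
    exact ENNReal.ofReal_lt_top
  -- the estimate
  set κ := Measure.map (GF c K e w) ρ with hκdef
  haveI : IsFiniteMeasure κ := by
    constructor
    rw [hκdef, Measure.map_apply_of_aemeasurable hGaem MeasurableSet.univ, Set.preimage_univ,
      hρdef, Measure.restrict_apply MeasurableSet.univ, Set.univ_inter, Real.volume_Ico]
    exact ENNReal.ofReal_lt_top
  intro ε hε
  -- choose the level m
  obtain ⟨m, hm⟩ := (rad_tendsto.eventually (gt_mem_nhds (show (0:ℝ) < ε/8 by linarith))).exists
  -- the finite index set of level-(m+1) cells
  set Vm : Finset (List ℕ) := (finite_range_Qmap hcov (m+1)).toFinset with hVmdef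
  have hVmem : ∀ l : List ℕ, l ∈ Vm ↔ ∃ z, Qmap c K (m+1) z = l := by
    intro l
    rw [hVmdef, Set.Finite.mem_toFinset]
    exact Set.mem_range
  have hVlen : ∀ l ∈ Vm, l.length = m + 1 := by
    intro l hl
    obtain ⟨z, rfl⟩ := (hVmem l).1 hl
    exact length_Qmap _ _
  have hVne : ∀ l ∈ Vm, (cellOf c K l).Nonempty := by
    intro l hl
    obtain ⟨z, rfl⟩ := (hVmem l).1 hl
    exact ⟨z, mem_cellOf_self _ _⟩
  have hVrep : ∀ l ∈ Vm, repPt c K e l ∈ cellOf c K l := fun l hl => repPt_mem (hVne l hl)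
  have hVdisj : (↑Vm : Set (List ℕ)).PairwiseDisjoint (cellOf c K) := by
    intro l hl l' hl' hne
    exact cell_disjoint_of_length (by rw [hVlen l hl, hVlen l' hl']) hne
  have hVcover : (Set.univ : Set Z) = ⋃ l ∈ Vm, cellOf c K l := by
    ext z
    simp only [Set.mem_univ, true_iff, Set.mem_iUnion]
    exact ⟨Qmap c K (m+1) z, (hVmem _).2 ⟨z, rfl⟩, mem_cellOf_self _ _⟩
  -- convergence of the cell masses
  have hsum0 : Tendsto
      (fun n => (D₀ + 1) * ∑ l ∈ Vm, |(ν n (cellOf c K l)).toReal - w l|) atTop (𝓝 0) := by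
    have h1 : Tendsto (fun n => ∑ l ∈ Vm, |(ν n (cellOf c K l)).toReal - w l|) atTop (𝓝 0) := by
      have := tendsto_finset_sum Vm
        (fun l _ => (((hw l).sub tendsto_const_nhds).abs :
          Tendsto (fun n => |(ν n (cellOf c K l)).toReal - w l|) atTop (𝓝 |w l - w l|)))
      simpa using this
    simpa using h1.const_mul (D₀ + 1)
  filter_upwards [hsum0.eventually (gt_mem_nhds (show (0:ℝ) < ε/2 by linarith))] with n hn
  intro f hfe hfl
  haveI := hfin n
  have hfc : Continuous f := hfl.continuous
  have hfb : ∀ x : Z, |f x| ≤ D₀ := by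
    intro x
    have h1 := hfl.dist_le_mul x e
    rw [Real.dist_eq, hfe, sub_zero, NNReal.coe_one] at h1
    calc |f x| ≤ 1 * dist x e := h1
      _ ≤ D₀ := by
        rw [one_mul]
        exact Metric.dist_le_diam_of_mem hbdd trivial trivial
  have hflip : ∀ x y : Z, |f x - f y| ≤ dist x y := by
    intro x y
    have h1 := hfl.dist_le_mul x y
    rwa [Real.dist_eq, NNReal.coe_one, one_mul] at h1
  set SUMν := ∑ l ∈ Vm, f (repPt c K e l) * (ν n (cellOf c K l)).toReal with hSUMν
  set SUMw := ∑ l ∈ Vm, f (repPt c K e l) * w l with hSUMw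
  -- Estimate 1 : ν-integral vs SUMν
  have hcellsum : ∑ l ∈ Vm, (ν n (cellOf c K l)).toReal = (ν n Set.univ).toReal := by
    rw [hVcover, measure_biUnion_finset hVdisj (fun l _ => measurableSet_cellOf _)]
    exact (ENNReal.toReal_sum fun l _ => measure_ne_top _ _).symm
  have est1 : |(∫ z, f z ∂(ν n)) - SUMν| ≤ 2 * rad m := by
    have hsplit : ∫ z, f z ∂(ν n) = ∑ l ∈ Vm, ∫ z in cellOf c K l, f z ∂(ν n) := by
      conv_lhs => rw [← setIntegral_univ (μ := ν n) (f := f), hVcover]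
      exact integral_biUnion_finset Vm (fun l _ => measurableSet_cellOf _) hVdisj
        (fun l _ => (integrable_of_continuous f hfc (ν n)).integrableOn)
    rw [hsplit, hSUMν, ← Finset.sum_sub_distrib]
    refine (Finset.abs_sum_le_sum_abs _ _).trans ?_
    have hper : ∀ l ∈ Vm,
        |(∫ z in cellOf c K l, f z ∂(ν n)) - f (repPt c K e l) * (ν n (cellOf c K l)).toReal|
          ≤ 2 * rad m * (ν n (cellOf c K l)).toReal := by
      intro l hl
      obtain ⟨j, l', rfl⟩ : ∃ j l', l = j :: l' := by
        cases l with
        | nil => exact absurd (hVlen _ hl) (by simp)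
        | cons j l' => exact ⟨j, l', rfl⟩
      have hl'len : l'.length = m := by
        have := hVlen _ hl; simpa using this
      have hdiff : (∫ z in cellOf c K (j :: l'), f z ∂(ν n))
          - f (repPt c K e (j :: l')) * (ν n (cellOf c K (j :: l'))).toReal
          = ∫ z in cellOf c K (j :: l'), (f z - f (repPt c K e (j :: l'))) ∂(ν n) := by
        rw [integral_sub ((integrable_of_continuous f hfc (ν n)).integrableOn)
          (integrableOn_const (measure_ne_top _ _))]
        rw [setIntegral_const, smul_eq_mul, mul_comm, measureReal_def]
      rw [hdiff]
      have := norm_setIntegral_le_of_norm_le_const (μ := ν n)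
        (s := cellOf c K (j :: l')) (C := 2 * rad m)
        (f := fun z => f z - f (repPt c K e (j :: l'))) (measure_lt_top _ _)
        (fun z hz => by
          rw [Real.norm_eq_abs]
          refine (hflip _ _).trans ?_
          have := dist_le_in_cell hcov hz (hVrep _ hl)
          rwa [hl'len] at this)
      rwa [Real.norm_eq_abs, measureReal_def] at this
    refine (Finset.sum_le_sum hper).trans ?_
    rw [← Finset.mul_sum, hcellsum]
    have := hmassR n Set.univ
    nlinarith [rad_pos m]
  -- Estimate 2 : κ-integral vs SUMw
  have hGmint : Integrable (fun t => f (GmF c K e w (m+1) t)) ρ := by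
    obtain ⟨C, hC⟩ := isCompact_univ.exists_bound_of_continuousOn hfc.continuousOn
    exact ⟨((hfc.measurable).comp (measurable_GmF (m+1))).aestronglyMeasurable,
      HasFiniteIntegral.of_bounded (ae_of_all _ fun t => hC _ trivial)⟩
  have hGint : Integrable (fun t => f (GF c K e w t)) ρ := by
    obtain ⟨C, hC⟩ := isCompact_univ.exists_bound_of_continuousOn hfc.continuousOn
    exact ⟨(hfc.measurable.comp_aemeasurable hGaem).aestronglyMeasurable,
      HasFiniteIntegral.of_bounded (ae_of_all _ fun t => hC _ trivial)⟩
  have est2 : |(∫ z, f z ∂κ) - SUMw| ≤ 2 * rad m * M := by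
    have hmapeq : ∫ z, f z ∂κ = ∫ t, f (GF c K e w t) ∂ρ := by
      rw [hκdef]
      exact integral_map hGaem hfc.aestronglyMeasurable
    have h2a : |(∫ t, f (GF c K e w t) ∂ρ) - ∫ t, f (GmF c K e w (m+1) t) ∂ρ|
        ≤ 2 * rad m * M := by
      rw [← integral_sub hGint hGmint]
      have hb := norm_integral_le_of_norm_le_const (μ := ρ) (C := 2 * rad m)
        (f := fun t => f (GF c K e w t) - f (GmF c K e w (m+1) t))
        (by
          rw [hρdef, ae_restrict_iff' measurableSet_Ico]
          refine ae_of_all _ fun t ht => ?_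
          rw [Real.norm_eq_abs]
          exact (hflip _ _).trans (hGdist t ht.1 ht.2 m))
      rw [Real.norm_eq_abs, measureReal_def, hρuniv] at hb
      exact hb
    have hGmIntOn : ∀ a b : ℝ,
        IntegrableOn (fun t => f (GmF c K e w (m+1) t)) (Set.Ico a b) volume := by
      intro a b
      obtain ⟨C, hC⟩ := isCompact_univ.exists_bound_of_continuousOn hfc.continuousOn
      haveI : IsFiniteMeasure ((volume : Measure ℝ).restrict (Set.Ico a b)) := by
        constructor
        rw [Measure.restrict_apply MeasurableSet.univ, Set.univ_inter, Real.volume_Ico]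
        exact ENNReal.ofReal_lt_top
      exact ⟨((hfc.measurable).comp (measurable_GmF (m+1))).aestronglyMeasurable.restrict,
        HasFiniteIntegral.of_bounded (ae_of_all _ fun t => hC _ trivial)⟩
    have h2b : ∫ t, f (GmF c K e w (m+1) t) ∂ρ = SUMw := by
      have hIcoCover : Set.Ico (0:ℝ) M = ⋃ l ∈ Vm, Set.Ico (Afun w l) (Afun w l + w l) := by
        ext t
        simp only [Set.mem_iUnion, Set.mem_Ico]
        constructor
        · rintro ⟨h0, h1⟩
          refine ⟨branch w (m+1) t, ?_, (hbrs (m+1) t h0 h1).1, (hbrs (m+1) t h0 h1).2⟩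
          obtain ⟨z, hz⟩ := hbne (m+1) t h0 h1
          have hz' : Qmap c K (m+1) z = branch w (m+1) t := by
            have : Qmap c K (branch w (m+1) t).length z = branch w (m+1) t := hz
            rwa [branch_length] at this
          exact (hVmem _).2 ⟨z, hz'⟩
        · rintro ⟨l, hl, h0, h1⟩
          have := hbru l t h0 h1
          exact ⟨this.1, this.2.1⟩
      have hIdisj : (↑Vm : Set (List ℕ)).PairwiseDisjoint
          (fun l => Set.Ico (Afun w l) (Afun w l + w l)) := by
        intro l hl l' hl' hne
        rw [Function.onFun, Set.disjoint_left]
        intro t ht ht'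
        have h1 := (hbru l t ht.1 ht.2).2.2
        have h2 := (hbru l' t ht'.1 ht'.2).2.2
        rw [hVlen l hl] at h1
        rw [hVlen l' hl'] at h2
        exact hne (h1.symm.trans h2)
      have hstep : ∀ l ∈ Vm, ∫ t in Set.Ico (Afun w l) (Afun w l + w l),
          f (GmF c K e w (m+1) t) = f (repPt c K e l) * w l := by
        intro l hl
        rw [setIntegral_congr_fun measurableSet_Ico
          (g := fun _ => f (repPt c K e l)) (fun t ht => by
            have h1 := (hbru l t ht.1 ht.2).2.2
            rw [hVlen l hl] at h1
            show f (repPt c K e (branch w (m+1) t)) = f (repPt c K e l)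
            rw [h1])]
        rw [setIntegral_const, smul_eq_mul, measureReal_def, Real.volume_Ico, add_sub_cancel_left,
          ENNReal.toReal_ofReal (hnn l), mul_comm]
      calc ∫ t, f (GmF c K e w (m+1) t) ∂ρ
          = ∫ t in Set.Ico (0:ℝ) M, f (GmF c K e w (m+1) t) := by rw [hρdef]
        _ = ∫ t in ⋃ l ∈ Vm, Set.Ico (Afun w l) (Afun w l + w l),
              f (GmF c K e w (m+1) t) := by rw [← hIcoCover]
        _ = ∑ l ∈ Vm, ∫ t in Set.Ico (Afun w l) (Afun w l + w l),
              f (GmF c K e w (m+1) t) := by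
            exact integral_biUnion_finset Vm (fun l _ => measurableSet_Ico) hIdisj
              (fun l _ => hGmIntOn _ _)
        _ = SUMw := Finset.sum_congr rfl hstep
    rw [hmapeq, ← h2b]
    exact h2a
  -- Estimate 3 : SUMν vs SUMw
  have est3 : |SUMν - SUMw| ≤ (D₀ + 1) * ∑ l ∈ Vm, |(ν n (cellOf c K l)).toReal - w l| := by
    rw [hSUMν, hSUMw, ← Finset.sum_sub_distrib]
    refine (Finset.abs_sum_le_sum_abs _ _).trans ?_
    rw [Finset.mul_sum]
    refine Finset.sum_le_sum fun l hl => ?_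
    rw [← mul_sub, abs_mul]
    refine mul_le_mul (by linarith [hfb (repPt c K e l)]) le_rfl (abs_nonneg _) (by linarith)
  -- combine
  have hfinal : |(∫ z, f z ∂(ν n)) - ∫ z, f z ∂κ| ≤
      2 * rad m + (D₀ + 1) * (∑ l ∈ Vm, |(ν n (cellOf c K l)).toReal - w l|) + 2 * rad m * M := by
    have htri : |(∫ z, f z ∂(ν n)) - ∫ z, f z ∂κ| ≤
        |(∫ z, f z ∂(ν n)) - SUMν| + |SUMν - SUMw| + |SUMw - ∫ z, f z ∂κ| := by
      have := abs_sub_le (∫ z, f z ∂(ν n)) SUMν (∫ z, f z ∂κ)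
      have h2 := abs_sub_le SUMν SUMw (∫ z, f z ∂κ)
      linarith
    rw [abs_sub_comm SUMw _] at htri
    linarith [est1, est2, est3]
  have hr : 2 * rad m + 2 * rad m * M ≤ ε / 2 := by
    nlinarith [rad_pos m, hm, hM0, hM1]
  linarith [hfinal, hn]

end KRUaux

section Glue

variable [CompactSpace Z]

lemma toSM_meas_eq (a b a' b' : Measure Z) [IsFiniteMeasure a] [IsFiniteMeasure b]
    [IsFiniteMeasure a'] [IsFiniteMeasure b']
    (h : a.toSignedMeasure - b.toSignedMeasure = a'.toSignedMeasure - b'.toSignedMeasure) :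
    a + b' = a' + b := by
  refine Measure.ext fun s hs => ?_
  have h1 : (a.toSignedMeasure - b.toSignedMeasure) s
      = (a'.toSignedMeasure - b'.toSignedMeasure) s := by rw [h]
  rw [VectorMeasure.sub_apply, VectorMeasure.sub_apply,
    Measure.toSignedMeasure_apply_measurable hs, Measure.toSignedMeasure_apply_measurable hs,
    Measure.toSignedMeasure_apply_measurable hs,
    Measure.toSignedMeasure_apply_measurable hs] at h1
  have h3 : ((a + b') s).toReal = ((a' + b) s).toReal := by
    rw [Measure.add_apply, Measure.add_apply,
      ENNReal.toReal_add (measure_ne_top _ _) (measure_ne_top _ _),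
      ENNReal.toReal_add (measure_ne_top _ _) (measure_ne_top _ _)]
    simp only [measureReal_def] at h1; linarith
  exact (ENNReal.toReal_eq_toReal_iff' (measure_ne_top _ _) (measure_ne_top _ _)).1 h3

lemma jordan_toSM (s : SignedMeasure Z) :
    s.toJordanDecomposition.posPart.toSignedMeasure
      - s.toJordanDecomposition.negPart.toSignedMeasure = s :=
  s.toSignedMeasure_toJordanDecomposition

lemma sInteg_eq_of_repr (s : SignedMeasure Z) (a b : Measure Z)
    [IsFiniteMeasure a] [IsFiniteMeasure b]
    (h : s = a.toSignedMeasure - b.toSignedMeasure) (f : Z → ℝ) (hf : Continuous f) :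
    sInteg s f = (∫ z, f z ∂a) - ∫ z, f z ∂b := by
  have hme : s.toJordanDecomposition.posPart + b = a + s.toJordanDecomposition.negPart :=
    toSM_meas_eq _ _ _ _ (by rw [jordan_toSM s, ← h])
  have h2 : (∫ z, f z ∂(s.toJordanDecomposition.posPart + b))
      = ∫ z, f z ∂(a + s.toJordanDecomposition.negPart) := by rw [hme]
  rw [integral_add_measure (KRUaux.integrable_of_continuous f hf _)
      (KRUaux.integrable_of_continuous f hf _),
    integral_add_measure (KRUaux.integrable_of_continuous f hf _)
      (KRUaux.integrable_of_continuous f hf _)] at h2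
  rw [sInteg]
  linarith

lemma tvNorm_le_of_repr (s : SignedMeasure Z) (a b : Measure Z)
    [IsFiniteMeasure a] [IsFiniteMeasure b]
    (h : s = a.toSignedMeasure - b.toSignedMeasure) :
    tvNorm s ≤ (a Set.univ).toReal + (b Set.univ).toReal := by
  have hme : s.toJordanDecomposition.posPart + b = a + s.toJordanDecomposition.negPart :=
    toSM_meas_eq _ _ _ _ (by rw [jordan_toSM s, ← h])
  obtain ⟨u, hu, h1, h2⟩ := s.toJordanDecomposition.mutuallySingular
  have happly : ∀ t : Set Z, s.toJordanDecomposition.posPart t + b t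
      = a t + s.toJordanDecomposition.negPart t := by
    intro t
    have := congrArg (fun m : Measure Z => m t) hme
    simpa [Measure.add_apply] using this
  have hpos : s.toJordanDecomposition.posPart Set.univ ≤ a Set.univ := by
    have e1 : s.toJordanDecomposition.posPart Set.univ
        = s.toJordanDecomposition.posPart uᶜ := by
      rw [← measure_add_measure_compl hu, h1, zero_add]
    have e2 := happly uᶜ
    rw [h2, add_zero] at e2
    calc s.toJordanDecomposition.posPart Set.univ
        = s.toJordanDecomposition.posPart uᶜ := e1
      _ ≤ s.toJordanDecomposition.posPart uᶜ + b uᶜ := le_self_add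
      _ = a uᶜ := e2
      _ ≤ a Set.univ := measure_mono (Set.subset_univ _)
  have hneg : s.toJordanDecomposition.negPart Set.univ ≤ b Set.univ := by
    have e1 : s.toJordanDecomposition.negPart Set.univ
        = s.toJordanDecomposition.negPart u := by
      rw [← measure_add_measure_compl hu.compl, compl_compl, h2, zero_add]
    have e2 := happly u
    rw [h1, zero_add] at e2
    calc s.toJordanDecomposition.negPart Set.univ
        = s.toJordanDecomposition.negPart u := e1
      _ ≤ a u + s.toJordanDecomposition.negPart u := le_add_self
      _ = b u := e2.symm
      _ ≤ b Set.univ := measure_mono (Set.subset_univ _)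
  have htv : tvNorm s = (s.toJordanDecomposition.posPart Set.univ).toReal
      + (s.toJordanDecomposition.negPart Set.univ).toReal := by
    rw [tvNorm, show s.totalVariation
        = s.toJordanDecomposition.posPart + s.toJordanDecomposition.negPart from rfl,
      Measure.add_apply, ENNReal.toReal_add (measure_ne_top _ _) (measure_ne_top _ _)]
  rw [htv]
  exact add_le_add (ENNReal.toReal_mono (measure_ne_top _ _) hpos)
    (ENNReal.toReal_mono (measure_ne_top _ _) hneg)

end Glue

/-- For a compact metric space `Z`, the unit total variation ball
`B = {μ ∈ M(Z) : ‖μ‖_TV ≤ 1}` is compact in the Kantorovich–Rubinstein norm: every sequence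
in `B` has a subsequence converging in `‖·‖_KRu` to an element of `B`. -/
theorem tv_ball_compact_in_kru [CompactSpace Z] (e : Z)
    (μ : ℕ → SignedMeasure Z) (hTV : ∀ n, tvNorm (μ n) ≤ 1) :
    ∃ (φ : ℕ → ℕ) (μlim : SignedMeasure Z), StrictMono φ ∧ tvNorm μlim ≤ 1 ∧
      Tendsto (fun k => kruNorm e (μ (φ k) - μlim)) atTop (nhds 0) := by
  classical
  -- construction of the hierarchical covers
  have hLm : ∀ m : ℕ, ∃ L : List Z, ∀ z : Z, ∃ j, j < L.length ∧
      dist z (L.getD j e) < KRUaux.rad m := by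
    intro m
    obtain ⟨t, -, htfin, hcover⟩ := finite_cover_balls_of_compact
      (isCompact_univ : IsCompact (Set.univ : Set Z)) (KRUaux.rad_pos m)
    refine ⟨htfin.toFinset.toList, fun z => ?_⟩
    obtain ⟨x, hx, hzx⟩ := Set.mem_iUnion₂.1 (hcover (Set.mem_univ z))
    have hxl : x ∈ htfin.toFinset.toList := by
      rw [Finset.mem_toList, Set.Finite.mem_toFinset]; exact hx
    obtain ⟨i, hi⟩ := List.mem_iff_get.1 hxl
    refine ⟨i.1, i.2, ?_⟩
    rw [List.getD_eq_get (i := i)]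
    have : htfin.toFinset.toList.get ⟨i.1, i.2⟩ = x := by rw [← hi]
    rw [this]
    exact Metric.mem_ball.1 hzx
  choose Lm hLcov using hLm
  set c : ℕ → ℕ → Z := fun m j => (Lm m).getD j e with hc
  set K : ℕ → ℕ := fun m => (Lm m).length with hK
  have hcov : ∀ m (z : Z), ∃ j, j < K m ∧ dist z (c m j) < KRUaux.rad m := hLcov
  -- the Jordan parts
  set ν : ℕ → Measure Z := fun n => (μ n).toJordanDecomposition.posPart with hν
  set ξ : ℕ → Measure Z := fun n => (μ n).toJordanDecomposition.negPart with hξ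
  have hfinν : ∀ n, IsFiniteMeasure (ν n) := fun n => inferInstance
  have hfinξ : ∀ n, IsFiniteMeasure (ξ n) := fun n => inferInstance
  have hrepr : ∀ n, μ n = (ν n).toSignedMeasure - (ξ n).toSignedMeasure :=
    fun n => (jordan_toSM (μ n)).symm
  have htvsum : ∀ n, (ν n Set.univ).toReal + (ξ n Set.univ).toReal ≤ 1 := by
    intro n
    have h1 : tvNorm (μ n) = (ν n Set.univ).toReal + (ξ n Set.univ).toReal := by
      rw [tvNorm, show (μ n).totalVariation = ν n + ξ n from rfl, Measure.add_apply,
        ENNReal.toReal_add (measure_ne_top _ _) (measure_ne_top _ _)]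
    linarith [hTV n, h1.symm.le]
  have hmassbd : ∀ (ρ' : ℕ → Measure Z), (∀ n, IsFiniteMeasure (ρ' n)) →
      (∀ n, (ρ' n Set.univ).toReal ≤ 1) → ∀ n, ρ' n Set.univ ≤ 1 := by
    intro ρ' hfin hle n
    haveI := hfin n
    refine (ENNReal.toReal_le_toReal (measure_ne_top _ _) ENNReal.one_ne_top).1 ?_
    rw [ENNReal.toReal_one]
    exact hle n
  have hmassν : ∀ n, ν n Set.univ ≤ 1 :=
    hmassbd ν hfinν fun n => by linarith [htvsum n, ENNReal.toReal_nonneg (a := ξ n Set.univ)]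
  have hmassξ : ∀ n, ξ n Set.univ ≤ 1 :=
    hmassbd ξ hfinξ fun n => by linarith [htvsum n, ENNReal.toReal_nonneg (a := ν n Set.univ)]
  -- diagonal extraction
  set y : ℕ → (List ℕ × Bool) → ℝ := fun n p =>
    if p.2 then (ν n (KRUaux.cellOf c K p.1)).toReal else (ξ n (KRUaux.cellOf c K p.1)).toReal
    with hy
  have hmem : ∀ n, y n ∈ Set.pi Set.univ (fun _ : List ℕ × Bool => Set.Icc (0:ℝ) 1) := by
    intro n p _
    have haux : ∀ (ρ' : Measure Z), IsFiniteMeasure ρ' → ρ' Set.univ ≤ 1 →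
        (ρ' (KRUaux.cellOf c K p.1)).toReal ∈ Set.Icc (0:ℝ) 1 := by
      intro ρ' hfin hle
      haveI := hfin
      refine ⟨ENNReal.toReal_nonneg, ?_⟩
      calc (ρ' (KRUaux.cellOf c K p.1)).toReal ≤ (ρ' Set.univ).toReal :=
            ENNReal.toReal_mono (measure_ne_top _ _) (measure_mono (Set.subset_univ _))
        _ ≤ 1 := by
            have := ENNReal.toReal_mono ENNReal.one_ne_top hle
            simpa using this
    rcases p with ⟨l, b⟩
    cases b
    · simpa [hy] using haux (ξ n) (hfinξ n) (hmassξ n)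
    · simpa [hy] using haux (ν n) (hfinν n) (hmassν n)
  obtain ⟨L, -, φ, hφ, hconv⟩ :=
    (isCompact_univ_pi (fun _ : List ℕ × Bool => isCompact_Icc)).tendsto_subseq hmem
  have hpt := tendsto_pi_nhds.1 hconv
  have hwp : ∀ l : List ℕ, Tendsto (fun k => (ν (φ k) (KRUaux.cellOf c K l)).toReal)
      atTop (𝓝 (L (l, true))) := by
    intro l
    have := hpt (l, true)
    simpa [hy, Function.comp] using this
  have hwn : ∀ l : List ℕ, Tendsto (fun k => (ξ (φ k) (KRUaux.cellOf c K l)).toReal)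
      atTop (𝓝 (L (l, false))) := by
    intro l
    have := hpt (l, false)
    simpa [hy, Function.comp] using this
  -- apply the core construction to positive and negative parts
  obtain ⟨κp, hκpfin, hκpuniv, hκpest⟩ := KRUaux.core_construction e c K hcov
    (fun k => ν (φ k)) (fun k => hfinν (φ k)) (fun k => hmassν (φ k))
    (fun l => L (l, true)) hwp
  obtain ⟨κn, hκnfin, hκnuniv, hκnest⟩ := KRUaux.core_construction e c K hcov
    (fun k => ξ (φ k)) (fun k => hfinξ (φ k)) (fun k => hmassξ (φ k))
    (fun l => L (l, false)) hwn
  haveI := hκpfin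
  haveI := hκnfin
  have hp0 : 0 ≤ L ([], true) :=
    ge_of_tendsto (hwp []) (Eventually.of_forall fun _ => ENNReal.toReal_nonneg)
  have hn0 : 0 ≤ L ([], false) :=
    ge_of_tendsto (hwn []) (Eventually.of_forall fun _ => ENNReal.toReal_nonneg)
  set μlim : SignedMeasure Z := κp.toSignedMeasure - κn.toSignedMeasure with hμlim
  have hcellnil : KRUaux.cellOf c K ([] : List ℕ) = Set.univ := KRUaux.cellOf_nil
  have hunivp : Tendsto (fun k => (ν (φ k) Set.univ).toReal) atTop (𝓝 (L ([], true))) := by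
    have := hwp []; rwa [hcellnil] at this
  have hunivn : Tendsto (fun k => (ξ (φ k) Set.univ).toReal) atTop (𝓝 (L ([], false))) := by
    have := hwn []; rwa [hcellnil] at this
  refine ⟨φ, μlim, hφ, ?_, ?_⟩
  · -- TV bound
    refine (tvNorm_le_of_repr μlim κp κn rfl).trans ?_
    rw [hκpuniv, hκnuniv, ENNReal.toReal_ofReal hp0, ENNReal.toReal_ofReal hn0]
    exact le_of_tendsto (hunivp.add hunivn)
      (Eventually.of_forall fun k => htvsum (φ k))
  · -- KRu convergence
    rw [NormedAddCommGroup.tendsto_nhds_zero]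
    intro ε hε
    have hmassconv : Tendsto (fun k => |(μ (φ k) - μlim) Set.univ|) atTop (𝓝 0) := by
      have happ : ∀ k, (μ (φ k) - μlim) Set.univ
          = ((ν (φ k) Set.univ).toReal - (ξ (φ k) Set.univ).toReal)
            - (L ([], true) - L ([], false)) := by
        intro k
        haveI := hfinν (φ k); haveI := hfinξ (φ k)
        rw [VectorMeasure.sub_apply, hμlim, VectorMeasure.sub_apply, hrepr (φ k),
          VectorMeasure.sub_apply, Measure.toSignedMeasure_apply_measurable MeasurableSet.univ,
          Measure.toSignedMeasure_apply_measurable MeasurableSet.univ,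
          Measure.toSignedMeasure_apply_measurable MeasurableSet.univ,
          Measure.toSignedMeasure_apply_measurable MeasurableSet.univ,
          measureReal_def, measureReal_def, measureReal_def, measureReal_def,
          hκpuniv, hκnuniv, ENNReal.toReal_ofReal hp0, ENNReal.toReal_ofReal hn0]
      have h1 : Tendsto (fun k => (μ (φ k) - μlim) Set.univ) atTop (𝓝 0) := by
        have h2 := (hunivp.sub hunivn).sub
          (tendsto_const_nhds (x := L ([], true) - L ([], false)) (f := atTop))
        rw [sub_self] at h2
        exact h2.congr fun k => (happ k).symm
      simpa using h1.abs
    filter_upwards [hκpest (ε/4) (by linarith), hκnest (ε/4) (by linarith),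
      hmassconv.eventually (gt_mem_nhds (show (0:ℝ) < ε/4 by linarith))] with k hk1 hk2 hk3
    set σ : SignedMeasure Z := μ (φ k) - μlim with hσdef
    haveI := hfinν (φ k); haveI := hfinξ (φ k)
    have hσ : σ = (ν (φ k) + κn).toSignedMeasure - (ξ (φ k) + κp).toSignedMeasure := by
      rw [hσdef, hμlim, hrepr (φ k), Measure.toSignedMeasure_add, Measure.toSignedMeasure_add]
      abel
    have hSbound : ∀ r ∈ {r : ℝ | ∃ f : Z → ℝ, f e = 0 ∧ LipschitzWith 1 f ∧ r = sInteg σ f},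
        r ≤ ε/2 := by
      rintro r ⟨f, hfe, hfl, rfl⟩
      have hint := sInteg_eq_of_repr σ _ _ hσ f hfl.continuous
      rw [integral_add_measure (KRUaux.integrable_of_continuous f hfl.continuous _)
          (KRUaux.integrable_of_continuous f hfl.continuous _),
        integral_add_measure (KRUaux.integrable_of_continuous f hfl.continuous _)
          (KRUaux.integrable_of_continuous f hfl.continuous _)] at hint
      have e1 := abs_le.1 (hk1 f hfe hfl)
      have e2 := abs_le.1 (hk2 f hfe hfl)
      rw [hint]
      linarith [e1.1, e1.2, e2.1, e2.2]
    have h0mem : (0:ℝ) ∈ {r : ℝ | ∃ f : Z → ℝ, f e = 0 ∧ LipschitzWith 1 f ∧ r = sInteg σ f} := by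
      refine ⟨fun _ => 0, rfl, (LipschitzWith.const (0:ℝ)).weaken (zero_le_one), ?_⟩
      rw [sInteg]
      simp
    have hbddA : BddAbove {r : ℝ | ∃ f : Z → ℝ, f e = 0 ∧ LipschitzWith 1 f ∧ r = sInteg σ f} :=
      ⟨ε/2, fun r hr => hSbound r hr⟩
    have hsup_le : sSup {r : ℝ | ∃ f : Z → ℝ, f e = 0 ∧ LipschitzWith 1 f ∧ r = sInteg σ f}
        ≤ ε/2 := Real.sSup_le hSbound (by linarith)
    have hsup_ge : 0 ≤ sSup {r : ℝ | ∃ f : Z → ℝ, f e = 0 ∧ LipschitzWith 1 f ∧ r = sInteg σ f} :=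
      le_csSup hbddA h0mem
    have hkru : kruNorm e σ = |σ Set.univ| +
        sSup {r : ℝ | ∃ f : Z → ℝ, f e = 0 ∧ LipschitzWith 1 f ∧ r = sInteg σ f} := rfl
    rw [Real.norm_eq_abs, abs_of_nonneg (by rw [hkru]; positivity)]
    rw [hkru]
    have hk3' : |σ Set.univ| < ε/4 := hk3
    linarith
end
end

section
/- Let H be a Hilbert space and let A : KRu(ℝ^{d+1}) → H be defined by Aμ = ∫_{ℝ^{d+1}} φ(z) dμ(z), where φ : ℝ^{d+1} → H is Lipschitz and positively 1-homogeneous (φ(tz) = t φ(z) for t > 0). Take Z = ℝ^{d+1} with the Euclidean distance and the origin as base point. Then the problem inf_{μ ∈ KRu(ℝ^{d+1})} F(Aμ) + G_{α,β}(μ) with p = 1 either has μ = 0 as a minimizer or does not admit any minimizer. -/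
open MeasureTheory Filter Topology
open scoped ENNReal NNReal

noncomputable section
attribute [local instance] Classical.propDecidable

variable {Z : Type*} [MetricSpace Z] [MeasurableSpace Z] [BorelSpace Z]

/-- Vector-valued integral of `φ` against a signed measure, via Jordan decomposition. -/
def vInteg {H : Type*} [NormedAddCommGroup H] [NormedSpace ℝ H]
    (μ : SignedMeasure Z) (φ : Z → H) : H :=
  (∫ z, φ z ∂μ.toJordanDecomposition.posPart) - ∫ z, φ z ∂μ.toJordanDecomposition.negPart


section Aux

open MeasureTheory

variable {E : Type*} [NormedAddCommGroup E] [NormedSpace ℝ E]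
  [MeasurableSpace E] [BorelSpace E]

lemma aux_jordan_pair (P Q : Measure E) [IsFiniteMeasure P] [IsFiniteMeasure Q]
    (h : P ⟂ₘ Q) :
    (P.toSignedMeasure - Q.toSignedMeasure).toJordanDecomposition =
      JordanDecomposition.mk P Q h := by
  have h1 : P.toSignedMeasure - Q.toSignedMeasure =
      (JordanDecomposition.mk P Q h).toSignedMeasure := rfl
  rw [h1, JordanDecomposition.toJordanDecomposition_toSignedMeasure]

lemma aux_tv_def (μ : SignedMeasure E) :
    μ.totalVariation = μ.toJordanDecomposition.posPart + μ.toJordanDecomposition.negPart := rfl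

lemma aux_lint_dist (m : Measure E) :
    ∫⁻ z, ENNReal.ofReal (dist z (0 : E) ^ (1 : ℝ)) ∂m = ∫⁻ z, (‖z‖₊ : ℝ≥0∞) ∂m := by
  congr 1
  funext z
  rw [Real.rpow_one, dist_zero_right, ofReal_norm_eq_enorm, enorm_eq_nnnorm]

lemma aux_lint_one_add (m : Measure E) [IsFiniteMeasure m] :
    ∫⁻ z, ENNReal.ofReal (1 + dist z (0 : E) ^ (1 : ℝ)) ∂m
      = m Set.univ + ∫⁻ z, (‖z‖₊ : ℝ≥0∞) ∂m := by
  have h : ∀ z : E, ENNReal.ofReal (1 + dist z (0 : E) ^ (1 : ℝ)) = 1 + (‖z‖₊ : ℝ≥0∞) := by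
    intro z
    rw [Real.rpow_one, dist_zero_right, ENNReal.ofReal_add zero_le_one (norm_nonneg _),
      ENNReal.ofReal_one, ofReal_norm_eq_enorm, enorm_eq_nnnorm]
  simp_rw [h]
  rw [lintegral_add_left measurable_const, lintegral_one]

lemma aux_univ_eq (μ : SignedMeasure E) :
    μ Set.univ = (μ.toJordanDecomposition.posPart Set.univ).toReal
      - (μ.toJordanDecomposition.negPart Set.univ).toReal := by
  conv_lhs => rw [← μ.toSignedMeasure_toJordanDecomposition]
  simp only [JordanDecomposition.toSignedMeasure]
  rw [VectorMeasure.sub_apply,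
    Measure.toSignedMeasure_apply_measurable MeasurableSet.univ,
    Measure.toSignedMeasure_apply_measurable MeasurableSet.univ]
  rfl

lemma aux_construction [SecondCountableTopology E] (μ : SignedMeasure E)
    {H : Type*} [NormedAddCommGroup H] [NormedSpace ℝ H]
    (φ : E → H) (hφc : Continuous φ) (hφ2 : ∀ z : E, φ ((2 : ℝ) • z) = (2 : ℝ) • φ z) :
    ∃ ν : SignedMeasure E,
      vInteg ν φ = vInteg μ φ ∧
      ν.totalVariation Set.univ = 2⁻¹ * μ.totalVariation Set.univ ∧
      (∫⁻ z, (‖z‖₊ : ℝ≥0∞) ∂ν.totalVariation) = ∫⁻ z, (‖z‖₊ : ℝ≥0∞) ∂μ.totalVariation ∧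
      ν Set.univ = 2⁻¹ * μ Set.univ ∧
      {r : ℝ | ∃ f : E → ℝ, f 0 = 0 ∧ LipschitzWith 1 f ∧ r = sInteg ν f} =
        {r : ℝ | ∃ f : E → ℝ, f 0 = 0 ∧ LipschitzWith 1 f ∧ r = sInteg μ f} := by
  set P := μ.toJordanDecomposition.posPart with hP
  set Q := μ.toJordanDecomposition.negPart with hQ
  haveI : IsFiniteMeasure P := μ.toJordanDecomposition.posPart_finite
  haveI : IsFiniteMeasure Q := μ.toJordanDecomposition.negPart_finite
  set T : E → E := fun z => (2 : ℝ) • z with hT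
  have hTm : Measurable T := measurable_id.const_smul (2 : ℝ)
  have hTm' : Measurable (fun z : E => (2 : ℝ)⁻¹ • z) := measurable_id.const_smul _
  set P' : Measure E := (2⁻¹ : ℝ≥0∞) • P.map T with hP'
  set Q' : Measure E := (2⁻¹ : ℝ≥0∞) • Q.map T with hQ'
  have hfin : ∀ (m : Measure E), IsFiniteMeasure m →
      IsFiniteMeasure ((2⁻¹ : ℝ≥0∞) • m.map T) := by
    intro m hm
    refine ⟨?_⟩
    rw [Measure.smul_apply, Measure.map_apply hTm MeasurableSet.univ, Set.preimage_univ,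
      smul_eq_mul]
    exact ENNReal.mul_lt_top (by simp) (measure_lt_top m _)
  haveI hfP : IsFiniteMeasure P' := hfin P μ.toJordanDecomposition.posPart_finite
  haveI hfQ : IsFiniteMeasure Q' := hfin Q μ.toJordanDecomposition.negPart_finite
  have hmapsing : P.map T ⟂ₘ Q.map T := by
    obtain ⟨S, hSm, hPS, hQS⟩ := μ.toJordanDecomposition.mutuallySingular
    refine ⟨(fun z : E => (2 : ℝ)⁻¹ • z) ⁻¹' S, hTm' hSm, ?_, ?_⟩
    · rw [Measure.map_apply hTm (hTm' hSm)]
      have h2 : T ⁻¹' ((fun z : E => (2 : ℝ)⁻¹ • z) ⁻¹' S) = S := by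
        ext z
        simp only [Set.mem_preimage, hT, smul_smul]
        norm_num
      rw [h2]
      exact hPS
    · rw [← Set.preimage_compl, Measure.map_apply hTm (hTm' hSm.compl)]
      have h2 : T ⁻¹' ((fun z : E => (2 : ℝ)⁻¹ • z) ⁻¹' Sᶜ) = Sᶜ := by
        ext z
        simp only [Set.mem_preimage, hT, smul_smul]
        norm_num
      rw [h2]
      exact hQS
  have hsing : P' ⟂ₘ Q' :=
    ((hmapsing.smul (2⁻¹ : ℝ≥0∞)).symm.smul (2⁻¹ : ℝ≥0∞)).symm
  set ν : SignedMeasure E := P'.toSignedMeasure - Q'.toSignedMeasure with hν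
  have hJ : ν.toJordanDecomposition = JordanDecomposition.mk P' Q' hsing :=
    aux_jordan_pair P' Q' hsing
  have hpos : ν.toJordanDecomposition.posPart = P' := by rw [hJ]
  have hneg : ν.toJordanDecomposition.negPart = Q' := by rw [hJ]
  have htoReal : (2⁻¹ : ℝ≥0∞).toReal = (2⁻¹ : ℝ) := by simp
  refine ⟨ν, ?_, ?_, ?_, ?_, ?_⟩
  · -- vInteg
    have key : ∀ m : Measure E, ∫ z, φ z ∂((2⁻¹ : ℝ≥0∞) • m.map T) = ∫ z, φ z ∂m := by
      intro m
      rw [integral_smul_measure, integral_map hTm.aemeasurable hφc.aestronglyMeasurable]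
      simp_rw [hT, hφ2]
      rw [integral_smul, htoReal, smul_smul]
      norm_num
    show (∫ z, φ z ∂ν.toJordanDecomposition.posPart) - ∫ z, φ z ∂ν.toJordanDecomposition.negPart
        = vInteg μ φ
    rw [hpos, hneg, hP', hQ', key P, key Q]
    rfl
  · -- total variation of univ
    rw [aux_tv_def, hpos, hneg, aux_tv_def, ← hP, ← hQ, Measure.add_apply, Measure.add_apply,
      hP', hQ', Measure.smul_apply, Measure.smul_apply,
      Measure.map_apply hTm MeasurableSet.univ, Measure.map_apply hTm MeasurableSet.univ,
      Set.preimage_univ, smul_eq_mul, smul_eq_mul, mul_add]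
  · -- lintegral of norm
    have key : ∀ m : Measure E,
        ∫⁻ z, (‖z‖₊ : ℝ≥0∞) ∂((2⁻¹ : ℝ≥0∞) • m.map T) = ∫⁻ z, (‖z‖₊ : ℝ≥0∞) ∂m := by
      intro m
      rw [lintegral_smul_measure,
        lintegral_map (measurable_nnnorm.coe_nnreal_ennreal) hTm]
      have h2 : ∀ z : E, ((‖T z‖₊ : ℝ≥0∞)) = 2 * (‖z‖₊ : ℝ≥0∞) := by
        intro z
        rw [hT]
        simp only [nnnorm_smul, Real.nnnorm_two, ENNReal.coe_mul, ENNReal.coe_ofNat]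
      simp_rw [h2]
      rw [lintegral_const_mul 2 (measurable_nnnorm.coe_nnreal_ennreal), smul_eq_mul, ← mul_assoc,
        ENNReal.inv_mul_cancel two_ne_zero ENNReal.ofNat_ne_top, one_mul]
    rw [aux_tv_def, hpos, hneg, aux_tv_def, ← hP, ← hQ, lintegral_add_measure,
      lintegral_add_measure, hP', hQ', key P, key Q]
  · -- ν univ
    have hμuniv : μ Set.univ = (P Set.univ).toReal - (Q Set.univ).toReal := aux_univ_eq μ
    rw [hν, VectorMeasure.sub_apply,
      Measure.toSignedMeasure_apply_measurable MeasurableSet.univ,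
      Measure.toSignedMeasure_apply_measurable MeasurableSet.univ,
      Measure.real_def, Measure.real_def,
      hP', hQ', Measure.smul_apply, Measure.smul_apply,
      Measure.map_apply hTm MeasurableSet.univ, Measure.map_apply hTm MeasurableSet.univ,
      Set.preimage_univ, smul_eq_mul, smul_eq_mul, ENNReal.toReal_mul, ENNReal.toReal_mul,
      htoReal, hμuniv]
    ring
  · -- the sup sets coincide
    have key : ∀ f : E → ℝ, Continuous f →
        sInteg ν f = sInteg μ (fun z => 2⁻¹ * f ((2 : ℝ) • z)) := by
      intro f hf
      have h1 : ∀ m : Measure E, ∫ z, f z ∂((2⁻¹ : ℝ≥0∞) • m.map T)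
          = ∫ z, 2⁻¹ * f ((2 : ℝ) • z) ∂m := by
        intro m
        rw [integral_smul_measure, integral_map hTm.aemeasurable hf.aestronglyMeasurable,
          integral_const_mul, htoReal, smul_eq_mul]
      show (∫ z, f z ∂ν.toJordanDecomposition.posPart)
            - (∫ z, f z ∂ν.toJordanDecomposition.negPart)
          = (∫ z, 2⁻¹ * f ((2:ℝ) • z) ∂μ.toJordanDecomposition.posPart)
            - ∫ z, 2⁻¹ * f ((2:ℝ) • z) ∂μ.toJordanDecomposition.negPart
      rw [hpos, hneg, hP', hQ', h1 P, h1 Q, hP, hQ]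
    have lip : ∀ (c : ℝ) (f : E → ℝ), 0 < c → LipschitzWith 1 f →
        LipschitzWith 1 (fun z : E => c⁻¹ * f (c • z)) := by
      intro c f hc hf
      refine LipschitzWith.of_dist_le_mul fun x y => ?_
      have h1 : dist (c⁻¹ * f (c • x)) (c⁻¹ * f (c • y))
          = c⁻¹ * dist (f (c • x)) (f (c • y)) := by
        rw [Real.dist_eq, Real.dist_eq, ← mul_sub, abs_mul, abs_of_pos (inv_pos.2 hc)]
      have h2 := hf.dist_le_mul (c • x) (c • y)
      rw [NNReal.coe_one, one_mul] at h2
      have h3 : dist (c • x) (c • y) = c * dist x y := by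
        rw [dist_smul₀, Real.norm_eq_abs, abs_of_pos hc]
      rw [h1, NNReal.coe_one, one_mul]
      calc c⁻¹ * dist (f (c • x)) (f (c • y)) ≤ c⁻¹ * (c * dist x y) := by
            apply mul_le_mul_of_nonneg_left _ (le_of_lt (inv_pos.2 hc))
            rw [← h3]; exact h2
        _ = dist x y := by
            rw [← mul_assoc, inv_mul_cancel₀ hc.ne', one_mul]
    ext r
    constructor
    · rintro ⟨f, hf0, hfl, rfl⟩
      exact ⟨fun z => 2⁻¹ * f ((2 : ℝ) • z), by simp [hf0],
        by simpa using lip 2 f two_pos hfl, key f hfl.continuous⟩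
    · rintro ⟨g, hg0, hgl, rfl⟩
      refine ⟨fun z => 2 * g ((2 : ℝ)⁻¹ • z), by simp [hg0], ?_, ?_⟩
      · have := lip 2⁻¹ g (by norm_num) hgl
        simpa using this
      · have hfc : Continuous (fun z : E => 2 * g ((2 : ℝ)⁻¹ • z)) :=
          continuous_const.mul (hgl.continuous.comp (continuous_const_smul _))
        rw [key _ hfc]
        congr 1
        funext z
        rw [smul_smul]
        norm_num
        ring
  
end Aux

/-- Take `Z = ℝ^{d+1}` with the Euclidean distance and the origin as base
point, let `φ : ℝ^{d+1} → H` be Lipschitz and positively 1-homogeneous, and let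
`Aμ = ∫ φ dμ`.  Then the problem `inf_μ F(Aμ) + G_{α,β}(μ)` with `p = 1` either has
`μ = 0` as a minimizer or does not admit any minimizer. -/
theorem zero_minimizer_or_no_minimizer_p_one (d : ℕ)
    {H : Type*} [NormedAddCommGroup H] [InnerProductSpace ℝ H] [CompleteSpace H]
    (φ : EuclideanSpace ℝ (Fin (d + 1)) → H) (K : ℝ≥0) (hφlip : LipschitzWith K φ)
    (hφhom : ∀ t : ℝ, 0 < t → ∀ z : EuclideanSpace ℝ (Fin (d + 1)), φ (t • z) = t • φ z)
    (α β : ℝ) (hα : 0 ≤ α) (hβ : 0 < β)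
    (F : H → EReal)
    (hFnebot : ∀ x, F x ≠ ⊥) (hFproper : ∃ x, F x ≠ ⊤)
    (hFconvex : ∀ x y : H, ∀ a b : ℝ, 0 ≤ a → 0 ≤ b → a + b = 1 →
      F (a • x + b • y) ≤ (a : EReal) * F x + (b : EReal) * F y)
    (hFcoercive : ∀ c : ℝ, ∃ R : ℝ, ∀ x : H, R ≤ ‖x‖ → (c : EReal) ≤ F x)
    (hFlsc : LowerSemicontinuous F) :
    (∀ μ : SignedMeasure (EuclideanSpace ℝ (Fin (d + 1))),
        F (vInteg (0 : SignedMeasure (EuclideanSpace ℝ (Fin (d + 1)))) φ) +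
          Gab 0 1 α β (0 : SignedMeasure (EuclideanSpace ℝ (Fin (d + 1)))) ≤
        F (vInteg μ φ) + Gab 0 1 α β μ) ∨
    ¬ ∃ μmin : SignedMeasure (EuclideanSpace ℝ (Fin (d + 1))),
        ∀ μ : SignedMeasure (EuclideanSpace ℝ (Fin (d + 1))),
          F (vInteg μmin φ) + Gab 0 1 α β μmin ≤ F (vInteg μ φ) + Gab 0 1 α β μ := by
  by_cases hzero : ∀ μ : SignedMeasure (EuclideanSpace ℝ (Fin (d + 1))),
      F (vInteg (0 : SignedMeasure (EuclideanSpace ℝ (Fin (d + 1)))) φ) + Gab 0 1 α β (0 : SignedMeasure (EuclideanSpace ℝ (Fin (d + 1)))) ≤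
        F (vInteg μ φ) + Gab 0 1 α β μ
  · exact Or.inl hzero
  · right
    rintro ⟨μs, hmin⟩
    push_neg at hzero
    obtain ⟨μ0, hμ0⟩ := hzero
    have hμsne : μs ≠ 0 := by
      rintro rfl
      exact absurd (hmin μ0) (not_le.mpr hμ0)
    have hlt0 : F (vInteg μs φ) + Gab 0 1 α β μs
        < F (vInteg (0 : SignedMeasure (EuclideanSpace ℝ (Fin (d + 1)))) φ) + Gab 0 1 α β (0 : SignedMeasure (EuclideanSpace ℝ (Fin (d + 1)))) :=
      lt_of_le_of_lt (hmin μ0) hμ0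
    have hnetop : F (vInteg μs φ) + Gab 0 1 α β μs ≠ ⊤ := (hlt0.trans_le le_top).ne
    have hGnb : Gab 0 1 α β μs ≠ ⊥ := by
      simp only [Gab]
      split
      · exact EReal.coe_ne_bot _
      · simp
    have hGne : Gab 0 1 α β μs ≠ ⊤ := by
      intro h
      rw [h, EReal.add_top_of_ne_bot (hFnebot _)] at hnetop
      exact hnetop rfl
    have hFne : F (vInteg μs φ) ≠ ⊤ := by
      intro h
      rw [h, EReal.top_add_of_ne_bot hGnb] at hnetop
      exact hnetop rfl
    have hMp : MemMp (0 : (EuclideanSpace ℝ (Fin (d + 1)))) 1 μs := by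
      by_contra h
      exact hGne (if_neg h)
    -- finiteness of the relevant quantities
    haveI : IsFiniteMeasure μs.totalVariation := by
      rw [aux_tv_def]
      infer_instance
    have hMfin : μs.totalVariation Set.univ ≠ ⊤ := measure_ne_top _ _
    have hsfin : (∫⁻ z, (‖z‖₊ : ℝ≥0∞) ∂μs.totalVariation) ≠ ⊤ := by
      have h := hMp
      simp only [MemMp] at h
      rw [aux_lint_dist] at h
      exact h.ne
    -- the rescaled competitor
    obtain ⟨ν, hvi, htv, hlint, huniv, hset⟩ :=
      aux_construction μs φ hφlip.continuous (fun z => hφhom 2 two_pos z)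
    have hMpν : MemMp (0 : (EuclideanSpace ℝ (Fin (d + 1)))) 1 ν := by
      simp only [MemMp]
      rw [aux_lint_dist, hlint]
      exact hsfin.lt_top
    haveI : IsFiniteMeasure ν.totalVariation := by
      rw [aux_tv_def]
      infer_instance
    -- momLint computations
    have hmomμ : momLint (0 : (EuclideanSpace ℝ (Fin (d + 1)))) 1 μs
        = μs.totalVariation Set.univ + ∫⁻ z, (‖z‖₊ : ℝ≥0∞) ∂μs.totalVariation := by
      simp only [momLint]
      rw [aux_lint_one_add]
    have hmomν : momLint (0 : (EuclideanSpace ℝ (Fin (d + 1)))) 1 ν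
        = 2⁻¹ * μs.totalVariation Set.univ + ∫⁻ z, (‖z‖₊ : ℝ≥0∞) ∂μs.totalVariation := by
      simp only [momLint]
      rw [aux_lint_one_add, htv, hlint]
    set Mr : ℝ := (μs.totalVariation Set.univ).toReal with hMr
    set sr : ℝ := (∫⁻ z, (‖z‖₊ : ℝ≥0∞) ∂μs.totalVariation).toReal with hsr
    have hmomμR : (momLint (0 : (EuclideanSpace ℝ (Fin (d + 1)))) 1 μs).toReal = Mr + sr := by
      rw [hmomμ, ENNReal.toReal_add hMfin hsfin]
    have hmomνR : (momLint (0 : (EuclideanSpace ℝ (Fin (d + 1)))) 1 ν).toReal = 2⁻¹ * Mr + sr := by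
      rw [hmomν, ENNReal.toReal_add (ENNReal.mul_ne_top (by simp) hMfin) hsfin,
        ENNReal.toReal_mul]
      norm_num
      rfl
    -- positivity of the total mass
    have hM0 : μs.totalVariation Set.univ ≠ 0 := by
      intro h
      apply hμsne
      rw [aux_tv_def, Measure.add_apply, add_eq_zero] at h
      have hps : μs.toJordanDecomposition.posPart = 0 := Measure.measure_univ_eq_zero.mp h.1
      have hng : μs.toJordanDecomposition.negPart = 0 := Measure.measure_univ_eq_zero.mp h.2
      rw [← μs.toSignedMeasure_toJordanDecomposition]
      simp only [JordanDecomposition.toSignedMeasure]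
      simp only [hps, hng, Measure.toSignedMeasure_zero, sub_zero]
    have hMrpos : 0 < Mr := ENNReal.toReal_pos hM0 hMfin
    -- kruNorm computations
    set a : ℝ := sSup {r : ℝ | ∃ f : (EuclideanSpace ℝ (Fin (d + 1))) → ℝ, f 0 = 0 ∧ LipschitzWith 1 f ∧ r = sInteg μs f}
      with ha
    have hkruν : kruNorm (0 : (EuclideanSpace ℝ (Fin (d + 1)))) ν = |(2 : ℝ)⁻¹ * μs Set.univ| + a := by
      simp only [kruNorm]
      rw [huniv, hset]
    have hkruμ : kruNorm (0 : (EuclideanSpace ℝ (Fin (d + 1)))) μs = |μs Set.univ| + a := rfl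
    -- the strict inequality between the regularizers
    have habs : |(2 : ℝ)⁻¹ * μs Set.univ| ≤ |μs Set.univ| := by
      rw [abs_mul, abs_of_pos (by norm_num : (0 : ℝ) < 2⁻¹)]
      have := abs_nonneg (μs Set.univ)
      linarith
    have hreal : α * kruNorm (0 : (EuclideanSpace ℝ (Fin (d + 1)))) ν + β * (momLint (0 : (EuclideanSpace ℝ (Fin (d + 1)))) 1 ν).toReal
        < α * kruNorm (0 : (EuclideanSpace ℝ (Fin (d + 1)))) μs + β * (momLint (0 : (EuclideanSpace ℝ (Fin (d + 1)))) 1 μs).toReal := by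
      rw [hkruν, hkruμ, hmomνR, hmomμR]
      have h1 : α * (|(2 : ℝ)⁻¹ * μs Set.univ| + a) ≤ α * (|μs Set.univ| + a) :=
        mul_le_mul_of_nonneg_left (add_le_add_left habs a) hα
      have h2 : β * (2⁻¹ * Mr + sr) < β * (Mr + sr) := by
        apply mul_lt_mul_of_pos_left _ hβ
        linarith
      linarith
    -- assemble the contradiction
    obtain ⟨r, hr⟩ : ∃ r : ℝ, F (vInteg μs φ) = (r : EReal) :=
      ⟨(F (vInteg μs φ)).toReal, (EReal.coe_toReal hFne (hFnebot _)).symm⟩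
    have hGμ : Gab (0 : (EuclideanSpace ℝ (Fin (d + 1)))) 1 α β μs
        = ((α * kruNorm (0 : (EuclideanSpace ℝ (Fin (d + 1)))) μs + β * (momLint (0 : (EuclideanSpace ℝ (Fin (d + 1)))) 1 μs).toReal : ℝ) : EReal) := by
      simp only [Gab]
      rw [if_pos hMp]
    have hGν : Gab (0 : (EuclideanSpace ℝ (Fin (d + 1)))) 1 α β ν
        = ((α * kruNorm (0 : (EuclideanSpace ℝ (Fin (d + 1)))) ν + β * (momLint (0 : (EuclideanSpace ℝ (Fin (d + 1)))) 1 ν).toReal : ℝ) : EReal) := by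
      simp only [Gab]
      rw [if_pos hMpν]
    have hfinal := hmin ν
    rw [hvi, hr, hGμ, hGν, ← EReal.coe_add, ← EReal.coe_add, EReal.coe_le_coe_iff] at hfinal
    linarith
end
end

section
/- For p ≥ 1, the extremal points of the unit ball B_{0,1} = {μ ∈ M_p(Z) : ∫_Z (1 + d(z,e)^p) d|μ|(z) ≤ 1} of the regularizer G_{0,1} are exactly the measures ± (1 + d(z,e)^p)^{-1} δ_z for z ∈ Z. -/
open MeasureTheory Filter Topology
open scoped ENNReal NNReal

noncomputable section
attribute [local instance] Classical.propDecidable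

variable {Z : Type*} [MetricSpace Z] [MeasurableSpace Z] [BorelSpace Z]

namespace ExtremeAux

set_option linter.unusedSectionVars false

lemma hd_pos (e z : Z) (p : ℝ) : (0:ℝ) < 1 + dist z e ^ p := by
  nlinarith [Real.rpow_nonneg (dist_nonneg (x := z) (y := e)) p]

lemma w_meas (e : Z) (p : ℝ) : Measurable fun z : Z => ENNReal.ofReal (1 + dist z e ^ p) := by
  fun_prop

lemma one_le_w (e : Z) (p : ℝ) (z : Z) : 1 ≤ ENNReal.ofReal (1 + dist z e ^ p) :=
  ENNReal.one_le_ofReal.2 (by nlinarith [Real.rpow_nonneg (dist_nonneg (x := z) (y := e)) p])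

lemma tv_le_setLint (e : Z) (p : ℝ) (μ : SignedMeasure Z) {A : Set Z} :
    μ.totalVariation A ≤ ∫⁻ z in A, ENNReal.ofReal (1 + dist z e ^ p) ∂μ.totalVariation := by
  rw [← setLIntegral_one]
  exact setLIntegral_mono (w_meas e p) fun z _ => one_le_w e p z

lemma tv_univ_le_momLint (e : Z) (p : ℝ) (μ : SignedMeasure Z) :
    μ.totalVariation Set.univ ≤ momLint e p μ := by
  have := tv_le_setLint e p μ (A := Set.univ)
  rwa [Measure.restrict_univ] at this

lemma memMp_of_momLint_le_one (e : Z) (p : ℝ) {μ : SignedMeasure Z}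
    (h : momLint e p μ ≤ 1) : MemMp e p μ := by
  refine lt_of_le_of_lt (le_trans ?_ h) ENNReal.one_lt_top
  refine lintegral_mono fun z => ENNReal.ofReal_le_ofReal ?_
  nlinarith [Real.rpow_nonneg (dist_nonneg (x := z) (y := e)) p]

lemma tv_toSM (ρ : Measure Z) [IsFiniteMeasure ρ] : ρ.toSignedMeasure.totalVariation = ρ := by
  have h : ρ.toSignedMeasure =
      (⟨ρ, 0, Measure.MutuallySingular.zero_right⟩ : JordanDecomposition Z).toSignedMeasure := by
    simp [JordanDecomposition.toSignedMeasure, Measure.toSignedMeasure_zero]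
  rw [SignedMeasure.totalVariation, SignedMeasure.toJordanDecomposition_eq h]
  simp

lemma tv_smul (μ : SignedMeasure Z) (r : ℝ) :
    (r • μ).totalVariation = ENNReal.ofReal |r| • μ.totalVariation := by
  rcases le_or_gt 0 r with hr | hr
  · rw [SignedMeasure.totalVariation, SignedMeasure.toJordanDecomposition_smul_real,
      JordanDecomposition.real_smul_posPart_nonneg _ _ hr,
      JordanDecomposition.real_smul_negPart_nonneg _ _ hr, SignedMeasure.totalVariation,
      smul_add, abs_of_nonneg hr]
    rfl
  · rw [show r • μ = -((-r) • μ) by ext s hs; simp [neg_mul], SignedMeasure.totalVariation_neg,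
      SignedMeasure.totalVariation, SignedMeasure.toJordanDecomposition_smul_real,
      JordanDecomposition.real_smul_posPart_nonneg _ _ (by linarith),
      JordanDecomposition.real_smul_negPart_nonneg _ _ (by linarith),
      SignedMeasure.totalVariation, smul_add, abs_of_neg hr]
    rfl

lemma momLint_smul (e : Z) (p : ℝ) (μ : SignedMeasure Z) (r : ℝ) :
    momLint e p (r • μ) = ENNReal.ofReal |r| * momLint e p μ := by
  rw [momLint, tv_smul, lintegral_smul_measure]
  rfl

lemma momLint_smul_diracSM (e : Z) (p : ℝ) (z : Z) (r : ℝ) :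
    momLint e p (r • diracSM z) = ENNReal.ofReal |r| * ENNReal.ofReal (1 + dist z e ^ p) := by
  rw [momLint, tv_smul, diracSM, tv_toSM, lintegral_smul_measure, lintegral_dirac, smul_eq_mul]

lemma diracSM_apply_self (z : Z) : diracSM z {z} = 1 := by
  rw [diracSM, Measure.toSignedMeasure_apply_measurable (measurableSet_singleton z)]
  simp [Measure.real]

lemma sm_eq_smul_diracSM (μ : SignedMeasure Z) (z : Z)
    (h : μ.totalVariation {z}ᶜ = 0) : μ = (μ {z}) • diracSM z := by
  ext s hs
  rw [VectorMeasure.smul_apply, diracSM, Measure.toSignedMeasure_apply_measurable hs]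
  have h1 : μ (s ∩ {z}ᶜ) = 0 :=
    SignedMeasure.null_of_totalVariation_zero μ
      (measure_mono_null Set.inter_subset_right h)
  have h2 : μ s = μ (s ∩ {z}) + μ (s ∩ {z}ᶜ) := by
    rw [← VectorMeasure.of_union
      (disjoint_compl_right.mono Set.inter_subset_right Set.inter_subset_right)
      (hs.inter (measurableSet_singleton z)) (hs.inter (measurableSet_singleton z).compl),
      Set.inter_union_compl]
  by_cases hz : z ∈ s
  · have hsz : s ∩ {z} = {z} := by
      ext u; simp only [Set.mem_inter_iff, Set.mem_singleton_iff]
      exact ⟨fun h => h.2, fun h => ⟨h ▸ hz, h⟩⟩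
    rw [h2, h1, hsz, add_zero, Measure.real, Measure.dirac_apply' _ hs, Set.indicator_of_mem hz]
    simp
  · have hsz : s ∩ {z} = ∅ := by
      ext u; simp only [Set.mem_inter_iff, Set.mem_singleton_iff, Set.mem_empty_iff_false]
      exact ⟨fun ⟨hu, hue⟩ => hz (hue ▸ hu), False.elim⟩
    rw [h2, h1, hsz, VectorMeasure.empty, add_zero, Measure.real, Measure.dirac_apply' _ hs,
      Set.indicator_of_notMem hz]
    simp

lemma tv_restrict (μ : SignedMeasure Z) {A : Set Z} (hA : MeasurableSet A) :
    SignedMeasure.totalVariation (μ.restrict A) = μ.totalVariation.restrict A := by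
  set j := μ.toJordanDecomposition with hj
  have hsing : j.posPart.restrict A ⟂ₘ j.negPart.restrict A :=
    j.mutuallySingular.mono Measure.restrict_le_self Measure.restrict_le_self
  have h : μ.restrict A =
      (⟨j.posPart.restrict A, j.negPart.restrict A, hsing⟩ :
        JordanDecomposition Z).toSignedMeasure := by
    ext s hs
    rw [VectorMeasure.restrict_apply μ hA hs, JordanDecomposition.toSignedMeasure,
      VectorMeasure.sub_apply, Measure.toSignedMeasure_apply_measurable hs,
      Measure.toSignedMeasure_apply_measurable hs, measureReal_restrict_apply hs,
      measureReal_restrict_apply hs]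
    conv_lhs => rw [← μ.toSignedMeasure_toJordanDecomposition]
    rw [JordanDecomposition.toSignedMeasure, VectorMeasure.sub_apply,
      Measure.toSignedMeasure_apply_measurable (hs.inter hA),
      Measure.toSignedMeasure_apply_measurable (hs.inter hA)]
  rw [SignedMeasure.totalVariation, SignedMeasure.toJordanDecomposition_eq h]
  simp only [SignedMeasure.totalVariation, ← Measure.restrict_add]
  rfl

lemma restrict_add_compl' (μ : SignedMeasure Z) {A : Set Z} (hA : MeasurableSet A) :
    μ.restrict A + μ.restrict Aᶜ = μ := by
  ext s hs
  rw [VectorMeasure.add_apply, VectorMeasure.restrict_apply _ hA hs,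
    VectorMeasure.restrict_apply _ hA.compl hs,
    ← VectorMeasure.of_union
      (disjoint_compl_right.mono Set.inter_subset_right Set.inter_subset_right)
      (hs.inter hA) (hs.inter hA.compl), Set.inter_union_compl]

lemma abs_apply_le_tv (μ : SignedMeasure Z) {s : Set Z} (hs : MeasurableSet s) :
    |μ s| ≤ (μ.totalVariation s).toReal := by
  conv_lhs => rw [← μ.toSignedMeasure_toJordanDecomposition]
  rw [JordanDecomposition.toSignedMeasure, VectorMeasure.sub_apply,
    Measure.toSignedMeasure_apply_measurable hs, Measure.toSignedMeasure_apply_measurable hs,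
    SignedMeasure.totalVariation, Measure.add_apply,
    ENNReal.toReal_add (measure_ne_top _ _) (measure_ne_top _ _)]
  have h1 := ENNReal.toReal_nonneg (a := μ.toJordanDecomposition.posPart s)
  have h2 := ENNReal.toReal_nonneg (a := μ.toJordanDecomposition.negPart s)
  rw [abs_le, Measure.real, Measure.real]
  constructor <;> linarith

lemma exists_dirac_of_zero_one [CompleteSpace Z] [TopologicalSpace.SeparableSpace Z]
    (ρ : Measure Z) (hρ : ρ ≠ 0)
    (h01 : ∀ A : Set Z, MeasurableSet A → ρ A = 0 ∨ ρ Aᶜ = 0) :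
    ∃ z : Z, ρ {z}ᶜ = 0 := by
  obtain ⟨s, hsc, hsd⟩ := TopologicalSpace.exists_countable_dense Z
  have key : ∀ n : ℕ, ∃ x : Z, ρ (Metric.closedBall x (1/(n+1)))ᶜ = 0 := by
    intro n
    by_contra hcon
    push_neg at hcon
    have hcover : (⋃ x ∈ s, Metric.closedBall x (1/(n+1))) = Set.univ := by
      ext y
      simp only [Set.mem_iUnion, Set.mem_univ, iff_true]
      obtain ⟨x, hxs, hxd⟩ := Metric.mem_closure_iff.1 (hsd y) (1/(n+1)) (by positivity)
      exact ⟨x, hxs, Metric.mem_closedBall.2 hxd.le⟩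
    have : ρ (⋃ x ∈ s, Metric.closedBall x (1/(n+1))) = 0 := by
      rw [measure_biUnion_null_iff hsc]
      intro x _
      rcases h01 (Metric.closedBall x (1/(n+1))) Metric.isClosed_closedBall.measurableSet with h | h
      · exact h
      · exact absurd h (hcon x)
    rw [hcover, Measure.measure_univ_eq_zero] at this
    exact hρ this
  choose x hx using key
  set C : ℕ → Set Z := fun n => Metric.closedBall (x n) (1/(n+1)) with hC
  have hDne : ∀ n : ℕ, (⋂ k : Fin (n+1), C k).Nonempty := by
    intro n
    rw [Set.nonempty_iff_ne_empty]
    intro hemp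
    have : ρ (⋂ k : Fin (n+1), C k)ᶜ = 0 := by
      rw [Set.compl_iInter]
      exact measure_iUnion_null fun k => hx k
    rw [hemp, Set.compl_empty, Measure.measure_univ_eq_zero] at this
    exact hρ this
  choose y hy using hDne
  have hyC : ∀ k n : ℕ, k ≤ n → y n ∈ C k := by
    intro k n hkn
    exact Set.mem_iInter.1 (hy n) ⟨k, by omega⟩
  have hb0 : Tendsto (fun N : ℕ => 2/((N:ℝ)+1)) atTop (𝓝 0) := by
    have := tendsto_one_div_add_atTop_nhds_zero_nat.const_mul (2:ℝ)
    simpa [mul_one_div, div_eq_mul_inv] using this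
  have hcauchy : CauchySeq y := by
    apply cauchySeq_of_le_tendsto_0 (fun N : ℕ => 2/((N:ℝ)+1)) _ hb0
    intro n m N hn hm
    have h1 := hyC N n hn
    have h2 := hyC N m hm
    rw [hC, Metric.mem_closedBall] at h1 h2
    calc dist (y n) (y m) ≤ dist (y n) (x N) + dist (x N) (y m) := dist_triangle _ _ _
    _ ≤ 1/(N+1) + 1/(N+1) := by
        have := dist_comm (x N) (y m) ▸ h2
        linarith [h1, this]
    _ = 2/(N+1) := by ring
  obtain ⟨z, hz⟩ := cauchySeq_tendsto_of_complete hcauchy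
  have hzC : ∀ k : ℕ, z ∈ C k := by
    intro k
    refine Metric.isClosed_closedBall.mem_of_tendsto hz ?_
    filter_upwards [eventually_ge_atTop k] with n hn using hyC k n hn
  refine ⟨z, measure_mono_null ?_ (measure_iUnion_null fun n => hx n)⟩
  intro u hu
  simp only [Set.mem_compl_iff, Set.mem_singleton_iff] at hu
  rw [Set.mem_iUnion]
  by_contra hcon
  push_neg at hcon
  simp only [Set.mem_compl_iff, not_not] at hcon
  have hle : ∀ n : ℕ, dist u z ≤ 2/((n:ℝ)+1) := by
    intro n
    have h1 : dist u (x n) ≤ 1/((n:ℝ)+1) := Metric.mem_closedBall.1 (hcon n)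
    have h2 : dist (x n) z ≤ 1/((n:ℝ)+1) := by
      have := Metric.mem_closedBall.1 (hzC n)
      rw [dist_comm]
      linarith
    calc dist u z ≤ dist u (x n) + dist (x n) z := dist_triangle _ _ _
    _ ≤ 2/((n:ℝ)+1) := by
        rw [show (2:ℝ)/((n:ℝ)+1) = 1/((n:ℝ)+1) + 1/((n:ℝ)+1) by ring]; linarith
  have : dist u z ≤ 0 := ge_of_tendsto hb0 (Eventually.of_forall hle)
  exact hu (dist_le_zero.1 this)

instance tv_isFinite (μ : SignedMeasure Z) : IsFiniteMeasure μ.totalVariation := by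
  rw [SignedMeasure.totalVariation]
  infer_instance

lemma seg_eq {a b t1 t2 r c : ℝ} (ha : 0 < a) (hb : 0 < b) (hab : a + b = 1)
    (h1 : |t1| ≤ c) (h2 : |t2| ≤ c) (hr : |r| = c) (hs : a * t1 + b * t2 = r) :
    t1 = r ∧ t2 = r := by
  obtain ⟨h1l, h1u⟩ := abs_le.1 h1
  obtain ⟨h2l, h2u⟩ := abs_le.1 h2
  rcases abs_cases r with ⟨hc, hr0⟩ | ⟨hc, hr0⟩
  · have hcr : c = r := by rw [← hr, hc]
    rw [hcr] at h1l h1u h2l h2u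
    have ht1 : r ≤ t1 := by nlinarith
    have ht2 : r ≤ t2 := by nlinarith
    exact ⟨le_antisymm h1u ht1, le_antisymm h2u ht2⟩
  · have hcr : c = -r := by rw [← hr, hc]
    rw [hcr] at h1l h1u h2l h2u
    have ht1 : t1 ≤ r := by nlinarith
    have ht2 : t2 ≤ r := by nlinarith
    exact ⟨le_antisymm ht1 (by linarith), le_antisymm ht2 (by linarith)⟩

end ExtremeAux


open ExtremeAux in
/-- For `p ≥ 1`, the extremal points of the unit ball
`B_{0,1} = {μ ∈ M_p(Z) : ∫ (1 + d(z,e)^p) d|μ| ≤ 1}` of `G_{0,1}` are exactly the measures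
`± (1 + d(z,e)^p)⁻¹ δ_z` for `z ∈ Z`. -/
theorem extremePoints_G01_ball [LocallyCompactSpace Z] [CompleteSpace Z]
    [TopologicalSpace.SeparableSpace Z] (hgeo : IsGeodesic Z) (e : Z)
    (p : ℝ) (hp : 1 ≤ p) :
    Set.extremePoints ℝ {μ : SignedMeasure Z | MemMp e p μ ∧ momLint e p μ ≤ 1} =
      {μ : SignedMeasure Z | ∃ z : Z,
        μ = (1 + dist z e ^ p)⁻¹ • diracSM z ∨
        μ = -((1 + dist z e ^ p)⁻¹ • diracSM z)} := by
  classical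
  have hd : ∀ z : Z, (0:ℝ) < 1 + dist z e ^ p := fun z => hd_pos e z p
  have hmemB : ∀ (z : Z) (r : ℝ), |r| = (1 + dist z e ^ p)⁻¹ →
      (r • diracSM z) ∈ {μ : SignedMeasure Z | MemMp e p μ ∧ momLint e p μ ≤ 1} := by
    intro z r hr
    have h1 : momLint e p (r • diracSM z) = 1 := by
      rw [momLint_smul_diracSM, hr, ← ENNReal.ofReal_mul (inv_nonneg.2 (hd z).le),
        inv_mul_cancel₀ (hd z).ne', ENNReal.ofReal_one]
    exact ⟨memMp_of_momLint_le_one e p h1.le, h1.le⟩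
  ext μ
  simp only [Set.mem_setOf_eq]
  constructor
  · intro hx
    obtain ⟨⟨hmp, hle⟩, hext⟩ := mem_extremePoints.1 hx
    have habs1 : |(1:ℝ)| = (1 + dist e e ^ p)⁻¹ := by
      rw [dist_self, Real.zero_rpow (by linarith : p ≠ 0)]
      norm_num
    have hone : ((1:ℝ) • diracSM e) ∈
        {μ : SignedMeasure Z | MemMp e p μ ∧ momLint e p μ ≤ 1} := hmemB e 1 habs1
    have hne : μ ≠ 0 := by
      rintro rfl
      have habs2 : |(-1:ℝ)| = (1 + dist e e ^ p)⁻¹ := by rw [abs_neg]; exact habs1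
      have hnegmem : (-((1:ℝ) • diracSM e)) ∈
          {μ : SignedMeasure Z | MemMp e p μ ∧ momLint e p μ ≤ 1} := by
        have := hmemB e (-1) habs2
        rwa [show ((-1:ℝ)) • diracSM e = -((1:ℝ) • diracSM e) by ext s hs; simp [neg_mul]] at this
      have hseg : (0 : SignedMeasure Z) ∈
          openSegment ℝ ((1:ℝ) • diracSM e) (-((1:ℝ) • diracSM e)) :=
        ⟨1/2, 1/2, by norm_num, by norm_num, by norm_num, by
          rw [smul_neg, ← sub_eq_add_neg, sub_self]⟩
      obtain ⟨h1, -⟩ := hext _ hone _ hnegmem hseg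
      have := congrArg (fun ν : SignedMeasure Z => ν {e}) h1
      simp only [VectorMeasure.smul_apply, VectorMeasure.zero_apply, smul_eq_mul, one_mul] at this
      rw [diracSM_apply_self] at this
      exact one_ne_zero this
    have htv0 : μ.totalVariation ≠ 0 := by
      intro h0
      apply hne
      ext s hs
      rw [VectorMeasure.zero_apply]
      exact SignedMeasure.null_of_totalVariation_zero μ (by rw [h0]; rfl)
    have htvuniv : μ.totalVariation Set.univ ≠ 0 := fun h =>
      htv0 (Measure.measure_univ_eq_zero.1 h)
    have hNpos : 0 < momLint e p μ :=
      lt_of_lt_of_le (pos_iff_ne_zero.2 htvuniv) (tv_univ_le_momLint e p μ)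
    have hNfin : momLint e p μ ≠ ⊤ := (lt_of_le_of_lt hle ENNReal.one_lt_top).ne
    -- the moment functional equals 1
    have hN1 : momLint e p μ = 1 := by
      by_contra hN
      have hlt : momLint e p μ < 1 := lt_of_le_of_ne hle hN
      set r := (momLint e p μ).toReal with hrdef
      have hr0 : 0 < r := ENNReal.toReal_pos hNpos.ne' hNfin
      have hr1 : r < 1 := by
        have := (ENNReal.toReal_lt_toReal hNfin ENNReal.one_ne_top).2 hlt
        simpa using this
      have hofr : ENNReal.ofReal r = momLint e p μ := ENNReal.ofReal_toReal hNfin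
      have hmem1 : (r⁻¹ • μ) ∈
          {μ : SignedMeasure Z | MemMp e p μ ∧ momLint e p μ ≤ 1} := by
        have hml : momLint e p (r⁻¹ • μ) = 1 := by
          rw [momLint_smul, abs_of_nonneg (inv_nonneg.2 hr0.le),
            ENNReal.ofReal_inv_of_pos hr0, hofr,
            ENNReal.inv_mul_cancel hNpos.ne' hNfin]
        exact ⟨memMp_of_momLint_le_one e p hml.le, hml.le⟩
      have h0B : (0 : SignedMeasure Z) ∈
          {μ : SignedMeasure Z | MemMp e p μ ∧ momLint e p μ ≤ 1} := by
        constructor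
        · rw [MemMp, SignedMeasure.totalVariation_zero]
          simp
        · rw [momLint, SignedMeasure.totalVariation_zero]
          simp
      have hseg : μ ∈ openSegment ℝ (r⁻¹ • μ) (0 : SignedMeasure Z) :=
        ⟨r, 1 - r, hr0, by linarith, by ring, by
          rw [smul_smul, mul_inv_cancel₀ hr0.ne', one_smul, smul_zero, add_zero]⟩
      obtain ⟨heq, -⟩ := hext _ hmem1 _ h0B hseg
      obtain ⟨s, hμs⟩ : ∃ s : Set Z, μ s ≠ 0 := by
        by_contra hcon
        push_neg at hcon
        exact hne (VectorMeasure.ext fun s _ => by rw [hcon s, VectorMeasure.zero_apply])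
      have hev := congrArg (fun ν : SignedMeasure Z => ν s) heq
      simp only [VectorMeasure.smul_apply, smul_eq_mul] at hev
      have hrinv : r⁻¹ = 1 := mul_right_cancel₀ hμs (by rw [one_mul]; exact hev)
      rw [inv_eq_one] at hrinv
      linarith
    -- zero-one law for the total variation
    have h01 : ∀ A : Set Z, MeasurableSet A →
        μ.totalVariation A = 0 ∨ μ.totalVariation Aᶜ = 0 := by
      intro A hA
      by_contra hcon
      push_neg at hcon
      obtain ⟨hA0, hAc0⟩ := hcon
      set a := ∫⁻ z in A, ENNReal.ofReal (1 + dist z e ^ p) ∂μ.totalVariation with hadef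
      set b := ∫⁻ z in Aᶜ, ENNReal.ofReal (1 + dist z e ^ p) ∂μ.totalVariation with hbdef
      have hab : a + b = 1 := by
        rw [hadef, hbdef, lintegral_add_compl _ hA]
        exact hN1
      have hapos : 0 < a := lt_of_lt_of_le (pos_iff_ne_zero.2 hA0) (tv_le_setLint e p μ)
      have hbpos : 0 < b := lt_of_lt_of_le (pos_iff_ne_zero.2 hAc0) (tv_le_setLint e p μ)
      have hafin : a ≠ ⊤ := by
        intro h; rw [h] at hab; simp at hab
      have hbfin : b ≠ ⊤ := by
        intro h; rw [h] at hab; simp at hab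
      have hta : ENNReal.ofReal a.toReal = a := ENNReal.ofReal_toReal hafin
      have htb : ENNReal.ofReal b.toReal = b := ENNReal.ofReal_toReal hbfin
      have htab : a.toReal + b.toReal = 1 := by
        rw [← ENNReal.toReal_add hafin hbfin, hab, ENNReal.toReal_one]
      have htapos : 0 < a.toReal := ENNReal.toReal_pos hapos.ne' hafin
      have htbpos : 0 < b.toReal := ENNReal.toReal_pos hbpos.ne' hbfin
      have hm1 : momLint e p (μ.restrict A) = a := by
        rw [momLint, tv_restrict μ hA]
      have hm2 : momLint e p (μ.restrict Aᶜ) = b := by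
        rw [momLint, tv_restrict μ hA.compl]
      have hmem1 : (a.toReal⁻¹ • μ.restrict A) ∈
          {μ : SignedMeasure Z | MemMp e p μ ∧ momLint e p μ ≤ 1} := by
        have hml : momLint e p (a.toReal⁻¹ • μ.restrict A) = 1 := by
          rw [momLint_smul, hm1, abs_of_nonneg (inv_nonneg.2 htapos.le),
            ENNReal.ofReal_inv_of_pos htapos, hta,
            ENNReal.inv_mul_cancel hapos.ne' hafin]
        exact ⟨memMp_of_momLint_le_one e p hml.le, hml.le⟩
      have hmem2 : (b.toReal⁻¹ • μ.restrict Aᶜ) ∈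
          {μ : SignedMeasure Z | MemMp e p μ ∧ momLint e p μ ≤ 1} := by
        have hml : momLint e p (b.toReal⁻¹ • μ.restrict Aᶜ) = 1 := by
          rw [momLint_smul, hm2, abs_of_nonneg (inv_nonneg.2 htbpos.le),
            ENNReal.ofReal_inv_of_pos htbpos, htb,
            ENNReal.inv_mul_cancel hbpos.ne' hbfin]
        exact ⟨memMp_of_momLint_le_one e p hml.le, hml.le⟩
      have hseg : μ ∈ openSegment ℝ (a.toReal⁻¹ • μ.restrict A) (b.toReal⁻¹ • μ.restrict Aᶜ) :=
        ⟨a.toReal, b.toReal, htapos, htbpos, htab, by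
          rw [smul_smul, mul_inv_cancel₀ htapos.ne', one_smul, smul_smul,
            mul_inv_cancel₀ htbpos.ne', one_smul, restrict_add_compl' μ hA]⟩
      obtain ⟨heq, -⟩ := hext _ hmem1 _ hmem2 hseg
      have hres : μ.restrict A = a.toReal • μ := by
        have hres' := congrArg (fun ν : SignedMeasure Z => a.toReal • ν) heq
        simp only [smul_smul, mul_inv_cancel₀ htapos.ne', one_smul] at hres'
        exact hres'
      have h1 : SignedMeasure.totalVariation (μ.restrict A) Aᶜ = 0 := by
        rw [tv_restrict μ hA, Measure.restrict_apply hA.compl]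
        simp [Set.compl_inter_self]
      have h2 : SignedMeasure.totalVariation (a.toReal • μ) Aᶜ ≠ 0 := by
        rw [tv_smul]
        simp only [Measure.smul_apply, smul_eq_mul]
        refine mul_ne_zero ?_ hAc0
        simp [ENNReal.ofReal_eq_zero, abs_of_pos htapos, not_le, htapos]
      rw [hres] at h1
      exact h2 h1
    obtain ⟨z, hz⟩ := exists_dirac_of_zero_one μ.totalVariation htv0 h01
    have hμd : μ = (μ {z}) • diracSM z := sm_eq_smul_diracSM μ z hz
    have hcomp : ENNReal.ofReal (|μ {z}| * (1 + dist z e ^ p)) = 1 := by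
      rw [ENNReal.ofReal_mul (abs_nonneg _), ← momLint_smul_diracSM e p z (μ {z}), ← hμd, hN1]
    have habs : |μ {z}| * (1 + dist z e ^ p) = 1 := by
      have := congrArg ENNReal.toReal hcomp
      rwa [ENNReal.toReal_ofReal (by positivity), ENNReal.toReal_one] at this
    have habs' : |μ {z}| = (1 + dist z e ^ p)⁻¹ := by
      rw [inv_eq_one_div]
      exact (eq_div_iff (hd z).ne').2 habs
    rcases (abs_eq (inv_nonneg.2 (hd z).le)).1 habs' with hm | hm
    · exact ⟨z, Or.inl (by rw [hμd, hm])⟩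
    · exact ⟨z, Or.inr (by rw [hμd, hm]; ext s hs; simp [neg_mul])⟩
  · rintro ⟨z, hz⟩
    have hc : (0:ℝ) < (1 + dist z e ^ p)⁻¹ := inv_pos.2 (hd z)
    obtain ⟨r, hr, hrμ⟩ : ∃ r : ℝ, |r| = (1 + dist z e ^ p)⁻¹ ∧ μ = r • diracSM z := by
      rcases hz with hz | hz
      · exact ⟨_, abs_of_pos hc, hz⟩
      · exact ⟨-(1 + dist z e ^ p)⁻¹, by rw [abs_neg]; exact abs_of_pos hc,
          by rw [hz]; ext s hs; simp [neg_mul]⟩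
    rw [mem_extremePoints]
    refine ⟨hrμ ▸ hmemB z r hr, ?_⟩
    intro μ₁ h1 μ₂ h2 hseg
    obtain ⟨a, b, ha, hb, hab, hsum⟩ := hseg
    have hzs : MeasurableSet ({z} : Set Z) := measurableSet_singleton z
    have hbound : ∀ ν : SignedMeasure Z,
        ν ∈ {μ : SignedMeasure Z | MemMp e p μ ∧ momLint e p μ ≤ 1} →
        |ν {z}| ≤ (1 + dist z e ^ p)⁻¹ := by
      intro ν hν
      have htv : ν.totalVariation {z} ≤ ENNReal.ofReal (1 + dist z e ^ p)⁻¹ := by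
        rw [ENNReal.ofReal_inv_of_pos (hd z), ENNReal.le_inv_iff_mul_le]
        calc ν.totalVariation {z} * ENNReal.ofReal (1 + dist z e ^ p)
            = ∫⁻ x in {z}, ENNReal.ofReal (1 + dist x e ^ p) ∂ν.totalVariation := by
              rw [lintegral_singleton, mul_comm]
          _ ≤ momLint e p ν := setLIntegral_le_lintegral _ _
          _ ≤ 1 := hν.2
      calc |ν {z}| ≤ (ν.totalVariation {z}).toReal := abs_apply_le_tv ν hzs
        _ ≤ (1 + dist z e ^ p)⁻¹ := by
            have := ENNReal.toReal_mono ENNReal.ofReal_ne_top htv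
            rwa [ENNReal.toReal_ofReal (inv_nonneg.2 (hd z).le)] at this
    have hμz : μ {z} = r := by
      rw [hrμ, VectorMeasure.smul_apply, diracSM_apply_self, smul_eq_mul, mul_one]
    have hsum' : a * μ₁ {z} + b * μ₂ {z} = r := by
      have := congrArg (fun ν : SignedMeasure Z => ν {z}) hsum
      simp only [VectorMeasure.add_apply, VectorMeasure.smul_apply, smul_eq_mul] at this
      rw [hμz] at this
      exact this
    obtain ⟨ht1, ht2⟩ := seg_eq ha hb hab (hbound μ₁ h1) (hbound μ₂ h2) hr hsum'
    have hfix : ∀ ν : SignedMeasure Z,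
        ν ∈ {μ : SignedMeasure Z | MemMp e p μ ∧ momLint e p μ ≤ 1} →
        ν {z} = r → ν = μ := by
      intro ν hν hνz
      have hlow : ENNReal.ofReal (1 + dist z e ^ p)⁻¹ ≤ ν.totalVariation {z} := by
        have h1' : (1 + dist z e ^ p)⁻¹ ≤ (ν.totalVariation {z}).toReal := by
          rw [← hr, ← hνz]; exact abs_apply_le_tv ν hzs
        have := ENNReal.ofReal_le_ofReal h1'
        rwa [ENNReal.ofReal_toReal (measure_ne_top _ _)] at this
      have hone_le : 1 ≤ ∫⁻ x in {z}, ENNReal.ofReal (1 + dist x e ^ p) ∂ν.totalVariation := by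
        rw [lintegral_singleton]
        calc (1:ℝ≥0∞)
            = ENNReal.ofReal (1 + dist z e ^ p) * ENNReal.ofReal (1 + dist z e ^ p)⁻¹ := by
              rw [← ENNReal.ofReal_mul (hd z).le, mul_inv_cancel₀ (hd z).ne',
                ENNReal.ofReal_one]
          _ ≤ _ := mul_le_mul_right hlow _
      have hplus := lintegral_add_compl
        (fun x => ENNReal.ofReal (1 + dist x e ^ p)) hzs (μ := ν.totalVariation)
      have hxy : (∫⁻ x in {z}, ENNReal.ofReal (1 + dist x e ^ p) ∂ν.totalVariation) +
          (∫⁻ x in ({z} : Set Z)ᶜ, ENNReal.ofReal (1 + dist x e ^ p) ∂ν.totalVariation) ≤ 1 := by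
        rw [hplus]; exact hν.2
      have hcompl0 :
          ∫⁻ x in ({z} : Set Z)ᶜ, ENNReal.ofReal (1 + dist x e ^ p) ∂ν.totalVariation = 0 := by
        by_contra hy0
        have hxfin : (∫⁻ x in {z}, ENNReal.ofReal (1 + dist x e ^ p) ∂ν.totalVariation) ≠ ⊤ :=
          (lt_of_le_of_lt (le_trans le_self_add hxy) ENNReal.one_lt_top).ne
        exact absurd (lt_of_le_of_lt hone_le
          (lt_of_lt_of_le (ENNReal.lt_add_right hxfin hy0) hxy)) (lt_irrefl _)
      have htvc : ν.totalVariation {z}ᶜ = 0 :=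
        le_antisymm (le_trans (tv_le_setLint e p ν) hcompl0.le) (zero_le)
      rw [sm_eq_smul_diracSM ν z htvc, hνz, hrμ]
    exact ⟨hfix μ₁ h1 ht1, hfix μ₂ h2 ht2⟩
end
end
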